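/- Let n ≥ 2 and 1 ≤ p < n, and let Ω ⊂ ℝⁿ be a bounded domain. Suppose there exist constants C ≥ 1 and λ ≥ 1 such that for every locally Lipschitz function u : Ω → ℝ, every x₀ ∈ Ω and every 0 < r < ∞, inf_{c∈ℝ} (∫_{B(x₀,r)∩Ω} |u(y) − c|^{np/(n−p)} dy)^{(n−p)/(np)} ≤ C (∫_{B(x₀,λr)∩Ω} |∇u(y)|^p dy)^{1/p}. Then Ω is LLC. -/

import Mathlib

open Set Metric MeasureTheory ENNReal NNReal

noncomputable section

/-- Euclidean space `ℝⁿ`. -/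
abbrev Euc (n : ℕ) : Type := EuclideanSpace ℝ (Fin n)

/-- `u` is locally Lipschitz on the set `Ω`. -/
def LocallyLipschitzOnSet {n : ℕ} (u : Euc n → ℝ) (Ω : Set (Euc n)) : Prop :=
  ∀ x ∈ Ω, ∃ K : ℝ≥0, ∃ s ∈ nhdsWithin x Ω, LipschitzOnWith K u s

/-- `x` and `y` are joined by a (continuous) curve lying in `S`. -/
def JoinedByCurveIn {n : ℕ} (S : Set (Euc n)) (x y : Euc n) : Prop :=
  ∃ γ : ℝ → Euc n, ContinuousOn γ (Icc 0 1) ∧ γ 0 = x ∧ γ 1 = y ∧ MapsTo γ (Icc 0 1) S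

/-- `γ` is parametrized by arclength on `[0, L]`. -/
def ArclengthOn {n : ℕ} (γ : ℝ → Euc n) (L : ℝ) : Prop :=
  ∀ s t : ℝ, 0 ≤ s → s ≤ t → t ≤ L → eVariationOn γ (Icc s t) = ENNReal.ofReal (t - s)

/-- `Ω` is an `ε₀`-uniform domain. -/
def IsUniformWith {n : ℕ} (Ω : Set (Euc n)) (ε₀ : ℝ) : Prop :=
  ∀ x ∈ Ω, ∀ y ∈ Ω, ∃ γ : ℝ → Euc n,
    ContinuousOn γ (Icc 0 1) ∧ γ 0 = x ∧ γ 1 = y ∧ MapsTo γ (Icc 0 1) Ω ∧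
    eVariationOn γ (Icc 0 1) ≤ ENNReal.ofReal (dist x y / ε₀) ∧
    ∀ t ∈ Icc (0:ℝ) 1,
      ε₀ * (dist x (γ t) * dist y (γ t)) / dist x y ≤ infDist (γ t) (frontier Ω)

/-- `Ω` is a uniform domain. -/
def IsUniformDomain {n : ℕ} (Ω : Set (Euc n)) : Prop :=
  ∃ ε₀ : ℝ, 0 < ε₀ ∧ ε₀ ≤ 1 ∧ IsUniformWith Ω ε₀

/-- `Ω` is an `α`-cigar domain: any two points can be joined by a rectifiable
(arclength-parametrized) curve in `Ω` along which
`∫_γ dist(z, ∂Ω)^(α-1) |dz| ≤ C |x - y|^α`. -/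
def IsCigarDomain {n : ℕ} (Ω : Set (Euc n)) (α : ℝ) : Prop :=
  ∃ C : ℝ, 0 < C ∧ ∀ x ∈ Ω, ∀ y ∈ Ω, ∃ L : ℝ, 0 ≤ L ∧ ∃ γ : ℝ → Euc n,
    γ 0 = x ∧ γ L = y ∧ MapsTo γ (Icc 0 L) Ω ∧ ArclengthOn γ L ∧
    (∫⁻ t in Icc (0:ℝ) L, ENNReal.ofReal (infDist (γ t) (frontier Ω) ^ (α - 1)) ∂volume)
      ≤ ENNReal.ofReal (C * dist x y ^ α)

/-- `Ω` is a `c₀`-John domain. -/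
def IsJohnDomain {n : ℕ} (Ω : Set (Euc n)) (c₀ : ℝ) : Prop :=
  ∃ x₀ ∈ Ω, ∀ x ∈ Ω, ∃ l : ℝ, 0 ≤ l ∧ ∃ γ : ℝ → Euc n,
    γ 0 = x ∧ γ l = x₀ ∧ MapsTo γ (Icc 0 l) Ω ∧ ArclengthOn γ l ∧
    ∀ t ∈ Icc (0:ℝ) l, c₀ * t ≤ infDist (γ t) (frontier Ω)

/-- `Ω` has the `C`-slice property with respect to `x₀`. -/
def HasSliceProperty {n : ℕ} (Ω : Set (Euc n)) (C : ℝ) (x₀ : Euc n) : Prop :=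
  ∀ x ∈ Ω, ∃ γ : ℝ → Euc n,
    ContinuousOn γ (Icc 0 1) ∧ γ 0 = x₀ ∧ γ 1 = x ∧ MapsTo γ (Icc 0 1) Ω ∧
    ∃ j : ℕ, ∃ U : Fin (j + 1) → Set (Euc n),
      (∀ i, IsOpen (U i) ∧ U i ⊆ Ω) ∧
      (Pairwise fun i₁ i₂ => Disjoint (U i₁) (U i₂)) ∧
      -- (1)
      x₀ ∈ U 0 ∧ x ∈ U (Fin.last j) ∧
      (∀ i : Fin (j + 1), 0 < (i : ℕ) → (i : ℕ) < j →
        x₀ ∈ Ω \ closure (U i) ∧ x ∈ Ω \ closure (U i) ∧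
        x ∉ connectedComponentIn (Ω \ closure (U i)) x₀) ∧
      -- (2)
      (∀ i : Fin (j + 1), 0 < (i : ℕ) → (i : ℕ) < j →
        ∀ γ' : ℝ → Euc n, ContinuousOn γ' (Icc 0 1) → MapsTo γ' (Icc 0 1) Ω →
          (∃ t ∈ Icc (0:ℝ) 1, γ' t = x) → (∃ t ∈ Icc (0:ℝ) 1, γ' t = x₀) →
          ENNReal.ofReal (diam (U i)) ≤
            ENNReal.ofReal C * eVariationOn γ' {t ∈ Icc (0:ℝ) 1 | γ' t ∈ U i}) ∧
      -- (3)
      (∀ t ∈ Icc (0:ℝ) 1,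
        ball (γ t) (infDist (γ t) (frontier Ω) / C) ⊆ ⋃ i, closure (U i)) ∧
      -- (4)
      (∀ i : Fin (j + 1), ∀ t ∈ Icc (0:ℝ) 1, γ t ∈ U i →
        diam (U i) ≤ C * infDist (γ t) (frontier Ω)) ∧
      (∀ i : Fin (j + 1), ∃ xi ∈ U i, (∃ t ∈ Icc (0:ℝ) 1, γ t = xi) ∧
        ((i : ℕ) = j → xi = x) ∧ ball xi (infDist xi (frontier Ω) / C) ⊆ U i)

/-- `Ω` satisfies the slice condition. -/
def SliceCondition {n : ℕ} (Ω : Set (Euc n)) : Prop :=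
  ∃ C : ℝ, 1 < C ∧ ∀ x₀ ∈ Ω, HasSliceProperty Ω C x₀

/-- `Ω` is LLC. -/
def IsLLC {n : ℕ} (Ω : Set (Euc n)) : Prop :=
  ∃ b : ℝ, 0 < b ∧ b ≤ 1 ∧ ∀ z : Euc n, ∀ r : ℝ, 0 < r →
    (∀ x ∈ Ω ∩ ball z r, ∀ y ∈ Ω ∩ ball z r, JoinedByCurveIn (Ω ∩ ball z (r / b)) x y) ∧
    (∀ x ∈ Ω \ ball z r, ∀ y ∈ Ω \ ball z r, JoinedByCurveIn (Ω \ ball z (b * r)) x y)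

/-- `Ω` is quasiconvex. -/
def IsQuasiconvex {n : ℕ} (Ω : Set (Euc n)) : Prop :=
  ∃ C : ℝ, 1 ≤ C ∧ ∀ x ∈ Ω, ∀ y ∈ Ω, ∃ γ : ℝ → Euc n,
    ContinuousOn γ (Icc 0 1) ∧ γ 0 = x ∧ γ 1 = y ∧ MapsTo γ (Icc 0 1) Ω ∧
    eVariationOn γ (Icc 0 1) ≤ ENNReal.ofReal (C * dist x y)

/-- The intrinsic (inner) metric of `Ω` (`∞` if there is no rectifiable curve). -/
def intrinsicDist {n : ℕ} (Ω : Set (Euc n)) (x y : Euc n) : ℝ≥0∞ :=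
  ⨅ (γ : ℝ → Euc n)
    (_ : ContinuousOn γ (Icc 0 1) ∧ γ 0 = x ∧ γ 1 = y ∧ MapsTo γ (Icc 0 1) Ω),
    eVariationOn γ (Icc 0 1)

/-- The intrinsic ball `B_Ω(x, r)`. -/
def intrinsicBall {n : ℕ} (Ω : Set (Euc n)) (x : Euc n) (r : ℝ) : Set (Euc n) :=
  {y ∈ Ω | intrinsicDist Ω x y < ENNReal.ofReal r}

/-- `Ω` is intrinsic Ahlfors `n`-regular. -/
def IntrinsicAhlforsRegular {n : ℕ} (Ω : Set (Euc n)) : Prop :=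
  ∃ c : ℝ, 0 < c ∧ c < 1 ∧ ∃ r₀ : ℝ, 0 < r₀ ∧ ∀ x ∈ Ω, ∀ r : ℝ, 0 < r → r < r₀ →
    ENNReal.ofReal c * volume (ball x r) ≤ volume (intrinsicBall Ω x r)

/-- `Ω` is a local Sobolev–Poincaré imbedding domain of order `p`, `1 ≤ p < n`. -/
def LocalSPLow (n : ℕ) (Ω : Set (Euc n)) (p : ℝ) : Prop :=
  ∃ C : ℝ, 1 ≤ C ∧ ∃ lam : ℝ, 1 ≤ lam ∧
    ∀ u : Euc n → ℝ, LocallyLipschitzOnSet u Ω →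
      ∀ x ∈ Ω, ∀ r : ℝ, 0 < r → r < diam Ω →
        (⨅ c : ℝ, (∫⁻ y in ball x r ∩ Ω,
            ENNReal.ofReal |u y - c| ^ ((n : ℝ) * p / ((n : ℝ) - p)) ∂volume)
              ^ (((n : ℝ) - p) / ((n : ℝ) * p)))
          ≤ ENNReal.ofReal C *
            (∫⁻ y in ball x (lam * r) ∩ Ω,
              ENNReal.ofReal ‖fderiv ℝ u y‖ ^ p ∂volume) ^ (1 / p)

/-- `Ω` is a local Sobolev–Poincaré imbedding domain of order `n`
(local Trudinger inequality). -/
def LocalSPn (n : ℕ) (Ω : Set (Euc n)) : Prop :=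
  ∃ C : ℝ, 1 ≤ C ∧ ∃ lam : ℝ, 1 ≤ lam ∧ ∃ A : ℝ, 0 < A ∧
    ∀ u : Euc n → ℝ, LocallyLipschitzOnSet u Ω →
      ∀ x ∈ Ω, ∀ r : ℝ, 0 < r → r < diam Ω →
        0 < (∫⁻ y in ball x (lam * r) ∩ Ω,
              ENNReal.ofReal ‖fderiv ℝ u y‖ ^ (n : ℝ) ∂volume) →
        (∫⁻ y in ball x (lam * r) ∩ Ω,
              ENNReal.ofReal ‖fderiv ℝ u y‖ ^ (n : ℝ) ∂volume) < ⊤ →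
        (⨅ c : ℝ, ∫⁻ y in ball x r ∩ Ω,
            ENNReal.ofReal (Real.exp ((A * |u y - c| /
              (∫⁻ z in ball x (lam * r) ∩ Ω,
                ENNReal.ofReal ‖fderiv ℝ u z‖ ^ (n : ℝ) ∂volume).toReal
                  ^ ((1 : ℝ) / (n : ℝ))) ^ ((n : ℝ) / ((n : ℝ) - 1)))) ∂volume)
          ≤ ENNReal.ofReal C * volume (ball x r)

/-- `Ω` is a local Sobolev–Poincaré imbedding domain of order `p`, `n < p < ∞`
(local Morrey inequality). -/
def LocalSPHigh (n : ℕ) (Ω : Set (Euc n)) (p : ℝ) : Prop :=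
  ∃ C : ℝ, 1 ≤ C ∧ ∃ lam : ℝ, 1 ≤ lam ∧
    ∀ u : Euc n → ℝ, LocallyLipschitzOnSet u Ω →
      ∀ x ∈ Ω, ∀ r : ℝ, 0 < r → r < diam Ω →
        ∀ x₁ ∈ ball x r ∩ Ω, ∀ x₂ ∈ ball x r ∩ Ω,
          ENNReal.ofReal |u x₁ - u x₂| ≤
            ENNReal.ofReal (C * dist x₁ x₂ ^ (1 - (n : ℝ) / p)) *
              (∫⁻ y in ball x (lam * r) ∩ Ω,
                ENNReal.ofReal ‖fderiv ℝ u y‖ ^ p ∂volume) ^ (1 / p)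

/-- `Ω` is a `p`-Poincaré domain. -/
def PoincareDomain (n : ℕ) (Ω : Set (Euc n)) (p : ℝ) : Prop :=
  ∃ C : ℝ, 1 ≤ C ∧ ∃ lam : ℝ, 1 ≤ lam ∧
    ∀ u : Euc n → ℝ, LocallyLipschitzOnSet u Ω →
      ∀ x ∈ Ω, ∀ r : ℝ, 0 < r → r < diam Ω →
        (volume (ball x r ∩ Ω))⁻¹ *
          (∫⁻ y in ball x r ∩ Ω,
            ENNReal.ofReal |u y - ⨍ z in ball x r ∩ Ω, u z ∂volume| ∂volume)
          ≤ ENNReal.ofReal (C * r) *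
            ((volume (ball x (lam * r) ∩ Ω))⁻¹ *
              ∫⁻ y in ball x (lam * r) ∩ Ω,
                ENNReal.ofReal ‖fderiv ℝ u y‖ ^ p ∂volume) ^ (1 / p)


namespace Stmt18

variable {n : ℕ}

/-- The Sobolev–Poincaré hypothesis. -/
def SPH (n : ℕ) (p C lam : ℝ) (Ω : Set (Euc n)) : Prop :=
  ∀ u : Euc n → ℝ, LocallyLipschitzOnSet u Ω →
    ∀ x₀ ∈ Ω, ∀ r : ℝ, 0 < r →
      (⨅ c : ℝ, (∫⁻ y in ball x₀ r ∩ Ω,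
          ENNReal.ofReal |u y - c| ^ ((n : ℝ) * p / ((n : ℝ) - p)) ∂volume)
            ^ (((n : ℝ) - p) / ((n : ℝ) * p)))
        ≤ ENNReal.ofReal C *
          (∫⁻ y in ball x₀ (lam * r) ∩ Ω,
            ENNReal.ofReal ‖fderiv ℝ u y‖ ^ p ∂volume) ^ (1 / p)

lemma sp_bound {p C lam : ℝ} (hn : 2 ≤ n) (hp1 : 1 ≤ p) (hpn : p < n)
    (hC : 1 ≤ C) {Ω : Set (Euc n)} (hΩo : IsOpen Ω)
    (hsp : SPH n p C lam Ω)
    {u : Euc n → ℝ} (hu : LocallyLipschitzOnSet u Ω)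
    {x₀ : Euc n} (hx₀ : x₀ ∈ Ω) {r : ℝ} (hr : 0 < r)
    {K' : Set (Euc n)} (hK' : MeasurableSet K') {L : ℝ} (hL0 : 0 ≤ L)
    (hgrad0 : ∀ w ∈ ball x₀ (lam * r) ∩ Ω, w ∉ K' → fderiv ℝ u w = 0)
    (hgradL : ∀ w ∈ ball x₀ (lam * r) ∩ Ω, ‖fderiv ℝ u w‖ ≤ L)
    {V₁ V₀ : Set (Euc n)} (hV₁m : MeasurableSet V₁) (hV₀m : MeasurableSet V₀)
    (hV₁s : V₁ ⊆ ball x₀ r ∩ Ω) (hV₀s : V₀ ⊆ ball x₀ r ∩ Ω)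
    {g m : ℝ} (hg : 0 < g) (hm0 : 0 ≤ m)
    (hm₁ : ENNReal.ofReal m ≤ volume V₁) (hm₀ : ENNReal.ofReal m ≤ volume V₀)
    (hsep : ∀ c : ℝ, (∀ w ∈ V₁, g ≤ |u w - c|) ∨ (∀ w ∈ V₀, g ≤ |u w - c|)) :
    g * m ^ (((n : ℝ) - p) / ((n : ℝ) * p)) ≤
      C * (L ^ p * (volume (K' ∩ (ball x₀ (lam * r) ∩ Ω))).toReal) ^ (1 / p) := by
  have hn0 : (0:ℝ) < n := by
    have : (2:ℝ) ≤ n := by exact_mod_cast hn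
    linarith
  have hnp : 0 < (n:ℝ) - p := by linarith
  have hp0 : 0 < p := by linarith
  have hC0 : 0 ≤ C := by linarith
  set q : ℝ := (n:ℝ) * p / ((n:ℝ) - p) with hq
  have hq0 : 0 < q := div_pos (mul_pos hn0 hp0) hnp
  have he₂ : ((n:ℝ) - p) / ((n:ℝ) * p) = 1 / q := by rw [hq, one_div_div]
  set S := ball x₀ (lam * r) ∩ Ω with hS
  have hSm : MeasurableSet S := measurableSet_ball.inter hΩo.measurableSet
  set KS := K' ∩ S with hKS
  have hKSm : MeasurableSet KS := hK'.inter hSm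
  have hKSfin : volume KS ≠ ⊤ := by
    refine ne_of_lt (lt_of_le_of_lt (measure_mono ?_)
      (measure_ball_lt_top (x := x₀) (r := lam * r)))
    exact fun w hw => hw.2.1
  set κ := (volume KS).toReal with hκ
  have hκ0 : 0 ≤ κ := ENNReal.toReal_nonneg
  -- RHS bound
  have hRHS : (∫⁻ y in S, ENNReal.ofReal ‖fderiv ℝ u y‖ ^ p ∂volume)
      ≤ ENNReal.ofReal (L ^ p) * volume KS := by
    rw [← lintegral_indicator hSm]
    calc ∫⁻ y, S.indicator (fun y => ENNReal.ofReal ‖fderiv ℝ u y‖ ^ p) y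
        ≤ ∫⁻ y, KS.indicator (fun _ => ENNReal.ofReal (L ^ p)) y := by
          refine lintegral_mono fun y => ?_
          by_cases hyS : y ∈ S
          · rw [Set.indicator_of_mem hyS]
            by_cases hyK : y ∈ K'
            · rw [Set.indicator_of_mem (show y ∈ KS from ⟨hyK, hyS⟩)]
              rw [ENNReal.ofReal_rpow_of_nonneg (norm_nonneg _) hp0.le]
              exact ENNReal.ofReal_le_ofReal
                (Real.rpow_le_rpow (norm_nonneg _) (hgradL y hyS) hp0.le)
            · rw [Set.indicator_of_notMem (show y ∉ KS from fun h => hyK h.1),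
                hgrad0 y hyS hyK]
              simp [ENNReal.zero_rpow_of_pos hp0]
          · rw [Set.indicator_of_notMem hyS]
            exact zero_le
      _ = ENNReal.ofReal (L ^ p) * volume KS := lintegral_indicator_const hKSm _
  have hRHS2 : ENNReal.ofReal C *
      (∫⁻ y in S, ENNReal.ofReal ‖fderiv ℝ u y‖ ^ p ∂volume) ^ (1 / p)
      ≤ ENNReal.ofReal (C * (L ^ p * κ) ^ (1 / p)) := by
    have h1 : ENNReal.ofReal (L ^ p) * volume KS = ENNReal.ofReal (L ^ p * κ) := by
      rw [← ENNReal.ofReal_toReal hKSfin, ← ENNReal.ofReal_mul (by positivity)]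
    rw [ENNReal.ofReal_mul hC0, ← ENNReal.ofReal_rpow_of_nonneg (by positivity) (by positivity)]
    exact mul_le_mul_right (by rw [← h1]; exact ENNReal.rpow_le_rpow hRHS (by positivity)) _
  -- LHS bound
  have key : ∀ c : ℝ, ∀ V : Set (Euc n), MeasurableSet V → V ⊆ ball x₀ r ∩ Ω →
      ENNReal.ofReal m ≤ volume V → (∀ w ∈ V, g ≤ |u w - c|) →
      ENNReal.ofReal (g * m ^ (1 / q)) ≤
        (∫⁻ y in ball x₀ r ∩ Ω, ENNReal.ofReal |u y - c| ^ q ∂volume) ^ (1 / q) := by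
    intro c V hVm hVs hmV hV
    have h1 : ENNReal.ofReal (g ^ q * m) ≤
        ∫⁻ y in ball x₀ r ∩ Ω, ENNReal.ofReal |u y - c| ^ q ∂volume := by
      calc ENNReal.ofReal (g ^ q * m)
          = ENNReal.ofReal (g ^ q) * ENNReal.ofReal m := ENNReal.ofReal_mul (by positivity)
        _ ≤ ENNReal.ofReal (g ^ q) * volume V := mul_le_mul_right hmV _
        _ = ∫⁻ _ in V, ENNReal.ofReal (g ^ q) ∂volume := (setLIntegral_const V _).symm
        _ ≤ ∫⁻ y in V, ENNReal.ofReal |u y - c| ^ q ∂volume := by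
            rw [← lintegral_indicator hVm, ← lintegral_indicator hVm]
            refine lintegral_mono fun y => ?_
            by_cases hy : y ∈ V
            · rw [Set.indicator_of_mem hy, Set.indicator_of_mem hy,
                ← ENNReal.ofReal_rpow_of_nonneg hg.le hq0.le]
              exact ENNReal.rpow_le_rpow (ENNReal.ofReal_le_ofReal (hV y hy)) hq0.le
            · rw [Set.indicator_of_notMem hy, Set.indicator_of_notMem hy]
        _ ≤ _ := lintegral_mono_set hVs
    have h2 : (ENNReal.ofReal (g ^ q * m)) ^ (1 / q) = ENNReal.ofReal (g * m ^ (1 / q)) := by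
      rw [ENNReal.ofReal_rpow_of_nonneg (by positivity) (by positivity)]
      congr 1
      rw [Real.mul_rpow (by positivity) hm0, ← Real.rpow_mul hg.le,
        mul_one_div_cancel hq0.ne', Real.rpow_one]
    rw [← h2]
    exact ENNReal.rpow_le_rpow h1 (by positivity)
  have hLHS : ENNReal.ofReal (g * m ^ (1 / q)) ≤
      ⨅ c : ℝ, (∫⁻ y in ball x₀ r ∩ Ω,
        ENNReal.ofReal |u y - c| ^ q ∂volume) ^ (1 / q) := by
    refine le_iInf fun c => ?_
    rcases hsep c with h | h
    · exact key c V₁ hV₁m hV₁s hm₁ h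
    · exact key c V₀ hV₀m hV₀s hm₀ h
  have hmain := hsp u hu x₀ hx₀ r hr
  rw [he₂] at hmain ⊢
  have := le_trans hLHS (le_trans hmain hRHS2)
  exact (ENNReal.ofReal_le_ofReal_iff (by positivity)).mp this


lemma vol_ball (hn : 2 ≤ n) (x : Euc n) {s : ℝ} (hs : 0 ≤ s) :
    volume (ball x s) = ENNReal.ofReal (s ^ n) * volume (ball (0 : Euc n) 1) := by
  haveI : Nonempty (Fin n) := ⟨⟨0, by omega⟩⟩
  have := MeasureTheory.Measure.addHaar_ball (μ := (volume : Measure (Euc n))) x hs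
  rwa [finrank_euclideanSpace_fin] at this

lemma vol_sphere (hn : 2 ≤ n) (x : Euc n) (s : ℝ) : volume (sphere x s) = 0 := by
  haveI : Nonempty (Fin n) := ⟨⟨0, by omega⟩⟩
  exact MeasureTheory.Measure.addHaar_sphere (μ := (volume : Measure (Euc n))) x s

lemma vol_inter_closedBall (hn : 2 ≤ n) (z : Euc n) (s : ℝ) (Ω : Set (Euc n)) :
    volume (closedBall z s ∩ Ω) = volume (ball z s ∩ Ω) := by
  refine le_antisymm ?_ (measure_mono (inter_subset_inter_left Ω ball_subset_closedBall))
  calc volume (closedBall z s ∩ Ω) ≤ volume ((ball z s ∩ Ω) ∪ sphere z s) := by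
        refine measure_mono fun w hw => ?_
        rcases lt_or_eq_of_le (mem_closedBall.1 hw.1) with h | h
        · exact Or.inl ⟨h, hw.2⟩
        · exact Or.inr h
    _ ≤ volume (ball z s ∩ Ω) + volume (sphere z s) := measure_union_le _ _
    _ = volume (ball z s ∩ Ω) := by rw [vol_sphere hn, add_zero]

lemma clamp_lip : LipschitzWith 1 (fun x : ℝ => min 1 (max 0 x)) := by
  have h1 : LipschitzWith 1 (fun x : ℝ => max 0 x) := by
    simpa using (LipschitzWith.const (b := (0:ℝ))).max (LipschitzWith.id)
  simpa using (LipschitzWith.const (b := (1:ℝ))).min h1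

/-- increasing ramp: `0` for `s ≤ a`, `1` for `s ≥ a + d`. -/
def ramp (a d s : ℝ) : ℝ := min 1 (max 0 ((s - a) / d))

/-- decreasing ramp: `1` for `s ≤ a - d`, `0` for `s ≥ a`. -/
def rampd (a d s : ℝ) : ℝ := min 1 (max 0 ((a - s) / d))

lemma ramp_zero {a d s : ℝ} (hd : 0 < d) (h : s ≤ a) : ramp a d s = 0 := by
  have : (s - a) / d ≤ 0 := div_nonpos_iff.2 (Or.inr ⟨by linarith, hd.le⟩)
  simp [ramp, max_eq_left this]

lemma ramp_one {a d s : ℝ} (hd : 0 < d) (h : a + d ≤ s) : ramp a d s = 1 := by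
  have h1 : (1:ℝ) ≤ (s - a) / d := (le_div_iff₀ hd).2 (by linarith)
  have h0 : (0:ℝ) ≤ (s - a) / d := by linarith
  simp [ramp, max_eq_right h0, min_eq_left h1]

lemma rampd_one {a d s : ℝ} (hd : 0 < d) (h : s ≤ a - d) : rampd a d s = 1 := by
  have h1 : (1:ℝ) ≤ (a - s) / d := (le_div_iff₀ hd).2 (by linarith)
  have h0 : (0:ℝ) ≤ (a - s) / d := by linarith
  simp [rampd, max_eq_right h0, min_eq_left h1]

lemma rampd_zero {a d s : ℝ} (hd : 0 < d) (h : a ≤ s) : rampd a d s = 0 := by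
  have : (a - s) / d ≤ 0 := div_nonpos_iff.2 (Or.inr ⟨by linarith, hd.le⟩)
  simp [rampd, max_eq_left this]

lemma ramp_mem {a d s : ℝ} : ramp a d s ∈ Icc (0:ℝ) 1 :=
  ⟨le_min (by norm_num) (le_max_left _ _), min_le_left _ _⟩

lemma affine_lip {a d : ℝ} (hd : 0 < d) :
    LipschitzWith (Real.toNNReal (1 / d)) (fun s : ℝ => (s - a) / d) := by
  refine LipschitzWith.of_dist_le_mul fun s t => ?_
  rw [Real.dist_eq, Real.dist_eq, Real.coe_toNNReal _ (by positivity), div_sub_div_same,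
    abs_div, abs_of_pos hd]
  rw [show s - a - (t - a) = s - t by ring]
  rw [div_eq_mul_inv, mul_comm, one_div]

lemma affine_lip' {a d : ℝ} (hd : 0 < d) :
    LipschitzWith (Real.toNNReal (1 / d)) (fun s : ℝ => (a - s) / d) := by
  refine LipschitzWith.of_dist_le_mul fun s t => ?_
  rw [Real.dist_eq, Real.dist_eq, Real.coe_toNNReal _ (by positivity), div_sub_div_same,
    abs_div, abs_of_pos hd]
  rw [show a - s - (a - t) = -(s - t) by ring, abs_neg]
  rw [div_eq_mul_inv, mul_comm, one_div]

lemma ramp_dist_lip {a d : ℝ} (hd : 0 < d) (z : Euc n) :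
    LipschitzWith (Real.toNNReal (1 / d)) (fun w : Euc n => ramp a d (dist w z)) := by
  have h := (clamp_lip.comp (affine_lip (a := a) hd)).comp (LipschitzWith.dist_left z)
  rw [one_mul, mul_one] at h; exact h

lemma rampd_dist_lip {a d : ℝ} (hd : 0 < d) (z : Euc n) :
    LipschitzWith (Real.toNNReal (1 / d)) (fun w : Euc n => rampd a d (dist w z)) := by
  have h := (clamp_lip.comp (affine_lip' (a := a) hd)).comp (LipschitzWith.dist_left z)
  rw [one_mul, mul_one] at h; exact h

lemma loclip_of_nhds {u : Euc n → ℝ} {Ω : Set (Euc n)} {K : ℝ≥0}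
    (h : ∀ w ∈ Ω, ∃ s ∈ nhds w, LipschitzOnWith K u s) : LocallyLipschitzOnSet u Ω :=
  fun x hx => by
    obtain ⟨s, hs, hl⟩ := h x hx
    exact ⟨K, s, nhdsWithin_le_nhds hs, hl⟩

lemma contAt_of_nhds {u : Euc n → ℝ} {K : ℝ≥0} {w : Euc n}
    (h : ∃ s ∈ nhds w, LipschitzOnWith K u s) : ContinuousAt u w := by
  obtain ⟨s, hs, hl⟩ := h
  exact hl.continuousOn.continuousAt hs

lemma fderiv_le_of_nhds {u : Euc n → ℝ} {K : ℝ≥0} {w : Euc n}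
    (h : ∃ s ∈ nhds w, LipschitzOnWith K u s) : ‖fderiv ℝ u w‖ ≤ K := by
  obtain ⟨s, hs, hl⟩ := h
  by_cases hd : DifferentiableAt ℝ u w
  · exact hd.hasFDerivAt.le_of_lipschitzOn hs hl
  · simp [fderiv_zero_of_not_differentiableAt hd]

lemma fderiv_zero_of_loc_const {u : Euc n → ℝ} {s : Set (Euc n)} (hs : IsOpen s) {w : Euc n}
    (hw : w ∈ s) {c : ℝ} (hc : ∀ v ∈ s, u v = c) : fderiv ℝ u w = 0 := by
  have h : u =ᶠ[nhds w] fun _ => c := Filter.eventuallyEq_of_mem (hs.mem_nhds hw) hc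
  rw [h.fderiv_eq]
  exact fderiv_const_apply c

lemma not_mem_closure_ccIn {U : Set (Euc n)} (hU : IsOpen U) {x w : Euc n}
    (hw : w ∈ U) (hwn : w ∉ connectedComponentIn U x) :
    w ∉ closure (connectedComponentIn U x) := by
  intro hcl
  obtain ⟨ε, hε, hball⟩ := Metric.isOpen_iff.1 hU w hw
  obtain ⟨v, hv, hvd⟩ := Metric.mem_closure_iff.1 hcl ε hε
  have hvball : v ∈ ball w ε := by rwa [mem_ball, dist_comm]
  have hsub : ball w ε ⊆ connectedComponentIn U v :=
    (convex_ball w ε).isPreconnected.subset_connectedComponentIn hvball hball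
  rw [← connectedComponentIn_eq hv] at hsub
  exact hwn (hsub (mem_ball_self hε))

lemma joined_of_subset {S T : Set (Euc n)} (hST : S ⊆ T) (hSo : IsOpen S)
    (hSc : IsConnected S) {x y : Euc n} (hx : x ∈ S) (hy : y ∈ S) :
    JoinedByCurveIn T x y := by
  have hpc : IsPathConnected S := (hSo.isConnected_iff_isPathConnected).mp hSc
  obtain ⟨γ, hγ⟩ := hpc.joinedIn x hx y hy
  refine ⟨γ.extend, γ.continuous_extend.continuousOn,
    γ.extend_zero, γ.extend_one, fun t ht => hST ?_⟩
  rw [γ.extend_apply ht]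
  exact hγ _

lemma sep01 {u : Euc n → ℝ} {V₁ V₀ : Set (Euc n)} (h₁ : ∀ w ∈ V₁, u w = 1)
    (h₀ : ∀ w ∈ V₀, u w = 0) :
    ∀ c : ℝ, (∀ w ∈ V₁, (1:ℝ)/2 ≤ |u w - c|) ∨ (∀ w ∈ V₀, (1:ℝ)/2 ≤ |u w - c|) := by
  intro c
  rcases le_or_gt c (1/2) with h | h
  · left
    intro w hw
    rw [h₁ w hw]
    calc (1:ℝ)/2 ≤ 1 - c := by linarith
      _ ≤ |1 - c| := le_abs_self _
  · right
    intro w hw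
    rw [h₀ w hw]
    calc (1:ℝ)/2 ≤ c := h.le
      _ ≤ |c| := le_abs_self _
      _ = |0 - c| := by rw [zero_sub, abs_neg]


lemma sp_zero_grad {p C lam : ℝ} (hn : 2 ≤ n) (hp1 : 1 ≤ p) (hpn : p < n)
    (hC : 1 ≤ C) {Ω : Set (Euc n)} (hΩo : IsOpen Ω) (hsp : SPH n p C lam Ω)
    {u : Euc n → ℝ} (hu : LocallyLipschitzOnSet u Ω)
    {x₀ : Euc n} (hx₀ : x₀ ∈ Ω) {t : ℝ} (ht : 0 < t)
    (hgrad : ∀ w ∈ ball x₀ (lam * t) ∩ Ω, fderiv ℝ u w = 0)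
    {V₁ V₀ : Set (Euc n)} (hV₁m : MeasurableSet V₁) (hV₀m : MeasurableSet V₀)
    (hV₁s : V₁ ⊆ ball x₀ t ∩ Ω) (hV₀s : V₀ ⊆ ball x₀ t ∩ Ω)
    {g : ℝ} (hg : 0 < g)
    (hsep : ∀ c : ℝ, (∀ w ∈ V₁, g ≤ |u w - c|) ∨ (∀ w ∈ V₀, g ≤ |u w - c|)) :
    volume V₁ = 0 ∨ volume V₀ = 0 := by
  have hp0 : 0 < p := by linarith
  by_contra hcon
  push_neg at hcon
  obtain ⟨h₁, h₀⟩ := hcon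
  set m : ℝ := min (volume V₁).toReal (volume V₀).toReal with hm
  have hfin₁ : volume V₁ ≠ ⊤ := by
    refine ne_of_lt (lt_of_le_of_lt (measure_mono (hV₁s.trans inter_subset_left))
      (measure_ball_lt_top))
  have hfin₀ : volume V₀ ≠ ⊤ := by
    refine ne_of_lt (lt_of_le_of_lt (measure_mono (hV₀s.trans inter_subset_left))
      (measure_ball_lt_top))
  have hm0 : 0 < m := by
    apply lt_min
    · exact ENNReal.toReal_pos h₁ hfin₁
    · exact ENNReal.toReal_pos h₀ hfin₀
  have hres := sp_bound hn hp1 hpn hC hΩo hsp hu hx₀ ht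
    (MeasurableSet.empty) (le_refl (0:ℝ))
    (fun w hw _ => hgrad w hw)
    (fun w hw => by rw [hgrad w hw]; simp)
    hV₁m hV₀m hV₁s hV₀s hg hm0.le
    (ENNReal.ofReal_le_of_le_toReal (min_le_left _ _))
    (ENNReal.ofReal_le_of_le_toReal (min_le_right _ _))
    hsep
  rw [Real.zero_rpow hp0.ne', zero_mul,
    Real.zero_rpow (by positivity : (1:ℝ)/p ≠ 0), mul_zero] at hres
  have hgm : 0 < g * m ^ (((n:ℝ) - p) / ((n:ℝ) * p)) := by
    have : (0:ℝ) < m ^ (((n:ℝ) - p) / ((n:ℝ) * p)) := Real.rpow_pos_of_pos hm0 _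
    exact mul_pos hg this
  linarith

lemma sp_aeconst {p C lam : ℝ} (hn : 2 ≤ n) (hp1 : 1 ≤ p) (hpn : p < n)
    (hC : 1 ≤ C) {Ω : Set (Euc n)} (hΩo : IsOpen Ω) (hsp : SPH n p C lam Ω)
    {u : Euc n → ℝ} (hu : LocallyLipschitzOnSet u Ω)
    (hcont : ∀ w ∈ Ω, ContinuousAt u w)
    {x₀ : Euc n} (hx₀ : x₀ ∈ Ω) {t : ℝ} (ht : 0 < t)
    (hgrad : ∀ w ∈ ball x₀ (lam * t) ∩ Ω, fderiv ℝ u w = 0)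
    {v : ℝ} {V : Set (Euc n)} (hVo : IsOpen V) (hVne : V.Nonempty)
    (hVs : V ⊆ ball x₀ t ∩ Ω) (hVval : ∀ w ∈ V, u w = v) :
    volume {w | w ∈ ball x₀ t ∩ Ω ∧ u w ≠ v} = 0 := by
  have hopen : ∀ k : ℕ, IsOpen {w | w ∈ Ω ∧ 1/((k:ℝ)+1) < |u w - v|} := by
    intro k
    rw [isOpen_iff_mem_nhds]
    intro w hw
    have hc : ContinuousAt (fun x => |u x - v|) w := ((hcont w hw.1).sub continuousAt_const).abs
    have h1 : (fun x => |u x - v|) ⁻¹' (Ioi (1/((k:ℝ)+1))) ∈ nhds w :=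
      hc.preimage_mem_nhds (isOpen_Ioi.mem_nhds hw.2)
    filter_upwards [Filter.inter_mem (hΩo.mem_nhds hw.1) h1] with x hx
    exact ⟨hx.1, hx.2⟩
  have hk : ∀ k : ℕ, volume ((ball x₀ t ∩ Ω) ∩ {w | w ∈ Ω ∧ 1/((k:ℝ)+1) < |u w - v|}) = 0 := by
    intro k
    have hkpos : (0:ℝ) < 1/((k:ℝ)+1) := by positivity
    have hsep : ∀ c : ℝ,
        (∀ w ∈ (ball x₀ t ∩ Ω) ∩ {w | w ∈ Ω ∧ 1/((k:ℝ)+1) < |u w - v|},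
          1/(2*((k:ℝ)+1)) ≤ |u w - c|) ∨ (∀ w ∈ V, 1/(2*((k:ℝ)+1)) ≤ |u w - c|) := by
      intro c
      rcases le_or_gt (1/(2*((k:ℝ)+1))) (|v - c|) with h | h
      · right
        intro w hw
        rw [hVval w hw]
        exact h
      · left
        intro w hw
        have h3 : |u w - v| ≤ |u w - c| + |c - v| := abs_sub_le _ _ _
        have h4 : |c - v| = |v - c| := abs_sub_comm _ _
        have h5 : 1/((k:ℝ)+1) < |u w - v| := hw.2.2
        have h6 : 1/((k:ℝ)+1) = 2*(1/(2*((k:ℝ)+1))) := by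
          field_simp
        linarith
    have := sp_zero_grad hn hp1 hpn hC hΩo hsp hu hx₀ ht hgrad
      ((measurableSet_ball.inter hΩo.measurableSet).inter (hopen k).measurableSet)
      hVo.measurableSet (inter_subset_left) hVs (by positivity) hsep
    rcases this with h | h
    · exact h
    · exact absurd h (hVo.measure_pos volume hVne).ne'
  have hsub : {w | w ∈ ball x₀ t ∩ Ω ∧ u w ≠ v} ⊆
      ⋃ k : ℕ, (ball x₀ t ∩ Ω) ∩ {w | w ∈ Ω ∧ 1/((k:ℝ)+1) < |u w - v|} := by
    intro w hw
    have : 0 < |u w - v| := abs_pos.2 (sub_ne_zero.2 hw.2)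
    obtain ⟨k, hk'⟩ := exists_nat_one_div_lt this
    exact mem_iUnion.2 ⟨k, hw.1, hw.1.2, by exact_mod_cast hk'⟩
  exact measure_mono_null hsub (measure_iUnion_null hk)


lemma lip_congr {K : ℝ≥0} {f g : Euc n → ℝ} {s : Set (Euc n)}
    (h : LipschitzOnWith K f s) (he : ∀ v ∈ s, g v = f v) : LipschitzOnWith K g s := by
  intro a ha b hb
  rw [he a ha, he b hb]
  exact h ha hb

lemma lip_const {K : ℝ≥0} {c : ℝ} {s : Set (Euc n)} :
    LipschitzOnWith K (fun _ : Euc n => c) s := by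
  intro a _ b _
  simp

lemma same_component {p C lam : ℝ} (hn : 2 ≤ n) (hp1 : 1 ≤ p) (hpn : p < n)
    (hC : 1 ≤ C) (hlam : 1 ≤ lam) {Ω : Set (Euc n)} (hΩo : IsOpen Ω)
    (hsp : SPH n p C lam Ω) {x y : Euc n} (hx : x ∈ Ω) (hy : y ∈ Ω)
    {r : ℝ} (hr : 0 < r) (hyx : dist y x < 2 * r) :
    y ∈ connectedComponentIn (Ω ∩ ball x (8 * (lam * r))) x := by
  classical
  have hlr : 0 < lam * r := by positivity
  set Λ := lam * r with hΛ
  set U := Ω ∩ ball x (8 * Λ) with hU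
  have hUo : IsOpen U := hΩo.inter isOpen_ball
  have hxU : x ∈ U := ⟨hx, mem_ball_self (by positivity)⟩
  set F := connectedComponentIn U x with hF
  have hFo : IsOpen F := hUo.connectedComponentIn
  by_contra hyF
  set θ : Euc n → ℝ := fun w => rampd (6 * Λ) (2 * Λ) (dist w x) with hθ
  set u : Euc n → ℝ := fun w => if w ∈ F then θ w else 0 with hu
  have hθlip : LipschitzWith (Real.toNNReal (1 / (2 * Λ))) θ := rampd_dist_lip (by positivity) x
  have hfar : ∀ v : Euc n, 6 * Λ ≤ dist v x → u v = 0 := by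
    intro v hv
    by_cases hvF : v ∈ F
    · simp only [hu, if_pos hvF, hθ]
      exact rampd_zero (by positivity) hv
    · simp [hu, if_neg hvF]
  have hzero_nclose : ∀ v : Euc n, v ∉ closure F → u v = 0 := by
    intro v hv
    simp [hu, if_neg (fun h => hv (subset_closure h))]
  have hnhds : ∀ w ∈ Ω, ∃ s ∈ nhds w, LipschitzOnWith (Real.toNNReal (1 / (2 * Λ))) u s := by
    intro w hw
    by_cases hwF : w ∈ F
    · exact ⟨F, hFo.mem_nhds hwF,
        lip_congr (hθlip.lipschitzOnWith (s := F)) (fun v hv => by simp [hu, if_pos hv])⟩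
    · rcases lt_or_ge (dist w x) (8 * Λ) with hlt | hge
      · have hwU : w ∈ U := ⟨hw, by rwa [mem_ball]⟩
        have hcl : w ∉ closure F := not_mem_closure_ccIn hUo hwU hwF
        exact ⟨(closure F)ᶜ, (isClosed_closure.isOpen_compl).mem_nhds hcl,
          lip_congr (lip_const (c := (0:ℝ))) (fun v hv => hzero_nclose v hv)⟩
      · refine ⟨(closedBall x (6 * Λ))ᶜ, ?_, lip_congr (lip_const (c := (0:ℝ))) (fun v hv => hfar v ?_)⟩
        · refine (isClosed_closedBall.isOpen_compl).mem_nhds ?_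
          simp only [mem_compl_iff, mem_closedBall, not_le]
          linarith
        · simp only [mem_compl_iff, mem_closedBall, not_le] at hv
          exact hv.le
  have hulip : LocallyLipschitzOnSet u Ω := loclip_of_nhds hnhds
  have h2Λ : lam * (2 * r) = 2 * Λ := by rw [hΛ]; ring
  have hgrad : ∀ w ∈ ball x (lam * (2 * r)) ∩ Ω, fderiv ℝ u w = 0 := by
    intro w hw
    have hd : dist w x < 2 * Λ := by
      have := hw.1
      rw [mem_ball, h2Λ] at this
      exact this
    by_cases hwF : w ∈ F
    · refine fderiv_zero_of_loc_const (s := F ∩ ball x (4*Λ)) (hFo.inter isOpen_ball) ⟨hwF, ?_⟩ (c := (1:ℝ)) ?_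
      · rw [mem_ball]
        linarith
      · intro v hv
        have hv4 : dist v x < 4 * Λ := by
          have := hv.2
          rwa [mem_ball] at this
        simp only [hu, if_pos hv.1, hθ]
        exact rampd_one (by positivity) (by linarith)
    · have hwU : w ∈ U := ⟨hw.2, by rw [mem_ball]; linarith⟩
      have hcl : w ∉ closure F := not_mem_closure_ccIn hUo hwU hwF
      exact fderiv_zero_of_loc_const (isClosed_closure.isOpen_compl) hcl (c := (0:ℝ))
        (fun v hv => hzero_nclose v hv)
  obtain ⟨ρx, hρx, hρxsub⟩ := Metric.isOpen_iff.1 hΩo x hx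
  set δ₁ := min r ρx with hδ₁
  have hδ₁pos : 0 < δ₁ := lt_min hr hρx
  have hrΛ : r ≤ 4 * Λ := by
    rw [hΛ]
    nlinarith
  have hV₁F : ball x δ₁ ⊆ F := by
    refine (convex_ball x δ₁).isPreconnected.subset_connectedComponentIn
      (mem_ball_self hδ₁pos) ?_
    intro v hv
    rw [mem_ball] at hv
    refine ⟨hρxsub ?_, ?_⟩
    · rw [mem_ball]
      exact lt_of_lt_of_le hv (min_le_right _ _)
    · rw [mem_ball]
      have : δ₁ ≤ r := min_le_left _ _
      linarith
  have hV₁val : ∀ v ∈ ball x δ₁, u v = 1 := by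
    intro v hv
    rw [mem_ball] at hv
    have : δ₁ ≤ r := min_le_left _ _
    simp only [hu, if_pos (hV₁F (by rw [mem_ball]; linarith)), hθ]
    refine rampd_one (by positivity) ?_
    have : (6:ℝ) * Λ - 2 * Λ = 4 * Λ := by ring
    linarith
  have hyU : y ∈ U := by
    refine ⟨hy, ?_⟩
    rw [mem_ball]
    nlinarith
  have hycl : y ∉ closure F := not_mem_closure_ccIn hUo hyU hyF
  obtain ⟨ρy, hρy, hρysub⟩ := Metric.isOpen_iff.1 (isClosed_closure.isOpen_compl) y hycl
  obtain ⟨ρy', hρy', hρysub'⟩ := Metric.isOpen_iff.1 hΩo y hy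
  set δ₀ := min (2 * r - dist y x) (min ρy ρy') with hδ₀
  have hδ₀pos : 0 < δ₀ := by
    refine lt_min (by linarith) (lt_min hρy hρy')
  have hV₀val : ∀ v ∈ ball y δ₀, u v = 0 := by
    intro v hv
    rw [mem_ball] at hv
    refine hzero_nclose v (hρysub ?_)
    rw [mem_ball]
    calc dist v y < δ₀ := hv
      _ ≤ ρy := le_trans (min_le_right _ _) (min_le_left _ _)
  have hV₀sub : ball y δ₀ ⊆ ball x (2 * r) ∩ Ω := by
    intro v hv
    rw [mem_ball] at hv
    constructor
    · rw [mem_ball]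
      have h1 : dist v x ≤ dist v y + dist y x := dist_triangle _ _ _
      have h2 : δ₀ ≤ 2 * r - dist y x := min_le_left _ _
      linarith
    · refine hρysub' ?_
      rw [mem_ball]
      calc dist v y < δ₀ := hv
        _ ≤ ρy' := le_trans (min_le_right _ _) (min_le_right _ _)
  have hV₁sub : ball x δ₁ ⊆ ball x (2 * r) ∩ Ω := by
    intro v hv
    rw [mem_ball] at hv
    have h1 : δ₁ ≤ r := min_le_left _ _
    refine ⟨by rw [mem_ball]; linarith, hρxsub ?_⟩
    rw [mem_ball]
    exact lt_of_lt_of_le hv (min_le_right _ _)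
  have hcon := sp_zero_grad hn hp1 hpn hC hΩo hsp hulip hx (t := 2 * r) (by positivity)
    hgrad measurableSet_ball measurableSet_ball hV₁sub hV₀sub
    (g := 1/2) (by norm_num) (sep01 hV₁val hV₀val)
  rcases hcon with h | h
  · exact absurd h (isOpen_ball.measure_pos volume (nonempty_ball.2 hδ₁pos)).ne'
  · exact absurd h (isOpen_ball.measure_pos volume (nonempty_ball.2 hδ₀pos)).ne'

lemma llc1 {p C lam : ℝ} (hn : 2 ≤ n) (hp1 : 1 ≤ p) (hpn : p < n)
    (hC : 1 ≤ C) (hlam : 1 ≤ lam) {Ω : Set (Euc n)} (hΩo : IsOpen Ω)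
    (hsp : SPH n p C lam Ω) {z : Euc n} {r : ℝ} (hr : 0 < r) {x y : Euc n}
    (hx : x ∈ Ω ∩ ball z r) (hy : y ∈ Ω ∩ ball z r) :
    JoinedByCurveIn (Ω ∩ ball z ((1 + 8 * lam) * r)) x y := by
  have hyx : dist y x < 2 * r := by
    have h1 : dist y z < r := by
      have := hy.2
      rwa [mem_ball] at this
    have h2 : dist x z < r := by
      have := hx.2
      rwa [mem_ball] at this
    calc dist y x ≤ dist y z + dist z x := dist_triangle _ _ _
      _ = dist y z + dist x z := by rw [dist_comm z x]
      _ < 2 * r := by linarith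
  have hcc := same_component hn hp1 hpn hC hlam hΩo hsp hx.1 hy.1 hr hyx
  set U := Ω ∩ ball x (8 * (lam * r)) with hU
  have hxU : x ∈ U := ⟨hx.1, mem_ball_self (by positivity)⟩
  refine joined_of_subset ?_ ((hΩo.inter isOpen_ball).connectedComponentIn)
    (isConnected_connectedComponentIn_iff.2 hxU) (mem_connectedComponentIn hxU) hcc
  refine (connectedComponentIn_subset _ _).trans ?_
  intro w hw
  refine ⟨hw.1, ?_⟩
  have h1 : dist w x < 8 * (lam * r) := by
    have := hw.2
    rwa [mem_ball] at this
  have h2 : dist x z < r := by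
    have := hx.2
    rwa [mem_ball] at this
  rw [mem_ball]
  calc dist w z ≤ dist w x + dist x z := dist_triangle _ _ _
    _ < 8 * (lam * r) + r := by linarith
    _ ≤ (1 + 8 * lam) * r := by nlinarith
    

lemma dagger {p C lam : ℝ} (hn : 2 ≤ n) (hp1 : 1 ≤ p) (hpn : p < n)
    (hC : 1 ≤ C) (hlam : 1 ≤ lam) {Ω : Set (Euc n)} (hΩo : IsOpen Ω)
    (hsp : SPH n p C lam Ω) {x : Euc n} (hx : x ∈ Ω) {t : ℝ} (ht : 0 < t) :
    min ((volume (ball x (t/2) ∩ Ω)).toReal)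
        ((volume (ball x (2*t) ∩ Ω)).toReal - (volume (ball x t ∩ Ω)).toReal)
      ≤ (4*C/t) ^ ((n:ℝ)*p/((n:ℝ)-p)) *
        ((volume (ball x t ∩ Ω)).toReal) ^ (((n:ℝ)*p/((n:ℝ)-p))/p) := by
  have hn0 : (0:ℝ) < n := by
    have : (2:ℝ) ≤ n := by exact_mod_cast hn
    linarith
  have hnp : 0 < (n:ℝ) - p := by linarith
  have hp0 : 0 < p := by linarith
  have hC0 : 0 < C := by linarith
  set q : ℝ := (n:ℝ) * p / ((n:ℝ) - p) with hq
  have hq0 : 0 < q := div_pos (mul_pos hn0 hp0) hnp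
  set u : Euc n → ℝ := fun w => rampd t (t/2) (dist w x) with hu
  have ht2 : (0:ℝ) < t/2 := by linarith
  have hlip : LipschitzWith (Real.toNNReal (1/(t/2))) u := rampd_dist_lip ht2 x
  have hnhds : ∀ w ∈ Ω, ∃ s ∈ nhds w, LipschitzOnWith (Real.toNNReal (1/(t/2))) u s :=
    fun w _ => ⟨univ, Filter.univ_mem, hlip.lipschitzOnWith⟩
  have hulip : LocallyLipschitzOnSet u Ω := loclip_of_nhds hnhds
  have hL : ∀ w ∈ ball x (lam * (2*t)) ∩ Ω, ‖fderiv ℝ u w‖ ≤ 2/t := by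
    intro w hw
    have h1 := fderiv_le_of_nhds (hnhds w hw.2)
    rwa [Real.coe_toNNReal _ (by positivity), one_div_div] at h1
  set K' : Set (Euc n) := closedBall x t \ ball x (t/2) with hK'
  have hK'm : MeasurableSet K' := measurableSet_closedBall.diff measurableSet_ball
  have hgrad0 : ∀ w ∈ ball x (lam * (2*t)) ∩ Ω, w ∉ K' → fderiv ℝ u w = 0 := by
    intro w _ hwK
    rcases not_and_or.1 (fun hc => hwK ⟨hc.1, hc.2⟩) with h | h
    · -- dist w x > t
      rw [mem_closedBall, not_le] at h
      refine fderiv_zero_of_loc_const (s := (closedBall x t)ᶜ)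
        (isClosed_closedBall.isOpen_compl) ?_ (c := (0:ℝ)) ?_
      · rwa [mem_compl_iff, mem_closedBall, not_le]
      · intro v hv
        rw [mem_compl_iff, mem_closedBall, not_le] at hv
        exact rampd_zero ht2 hv.le
    · -- dist w x < t/2
      rw [not_not] at h
      refine fderiv_zero_of_loc_const (s := ball x (t/2)) isOpen_ball h (c := (1:ℝ)) ?_
      intro v hv
      rw [mem_ball] at hv
      exact rampd_one ht2 (by linarith)
  set V₁ : Set (Euc n) := ball x (t/2) ∩ Ω with hV₁
  set V₀ : Set (Euc n) := (ball x (2*t) ∩ Ω) \ closedBall x t with hV₀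
  have hV₁m : MeasurableSet V₁ := measurableSet_ball.inter hΩo.measurableSet
  have hV₀m : MeasurableSet V₀ :=
    (measurableSet_ball.inter hΩo.measurableSet).diff measurableSet_closedBall
  have hV₁s : V₁ ⊆ ball x (2*t) ∩ Ω :=
    inter_subset_inter_left Ω (ball_subset_ball (by linarith))
  have hV₀s : V₀ ⊆ ball x (2*t) ∩ Ω := diff_subset
  have hV₁val : ∀ w ∈ V₁, u w = 1 := by
    intro w hw
    have := hw.1
    rw [mem_ball] at this
    exact rampd_one ht2 (by linarith)
  have hV₀val : ∀ w ∈ V₀, u w = 0 := by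
    intro w hw
    have := hw.2
    rw [mem_closedBall, not_le] at this
    exact rampd_zero ht2 this.le
  set Φh : ℝ := (volume (ball x (t/2) ∩ Ω)).toReal with hΦh
  set Φ1 : ℝ := (volume (ball x t ∩ Ω)).toReal with hΦ1
  set Φ2 : ℝ := (volume (ball x (2*t) ∩ Ω)).toReal with hΦ2
  have hfin : ∀ s' : ℝ, volume (ball x s' ∩ Ω) ≠ ⊤ := fun s' =>
    ne_of_lt (lt_of_le_of_lt (measure_mono inter_subset_left) measure_ball_lt_top)
  have hΦmono : Φ1 ≤ Φ2 := ENNReal.toReal_mono (hfin _)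
    (measure_mono (inter_subset_inter_left Ω (ball_subset_ball (by linarith))))
  set m : ℝ := min Φh (Φ2 - Φ1) with hm
  have hm0 : 0 ≤ m := le_min ENNReal.toReal_nonneg (by linarith)
  -- volume of V₀
  have hvol₀ : volume V₀ = volume (ball x (2*t) ∩ Ω) - volume (ball x t ∩ Ω) := by
    have h1 : V₀ = (ball x (2*t) ∩ Ω) \ (closedBall x t ∩ (ball x (2*t) ∩ Ω)) := by
      rw [Set.diff_inter_self_eq_diff]
    have h2 : closedBall x t ∩ (ball x (2*t) ∩ Ω) = closedBall x t ∩ Ω := by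
      ext w
      constructor
      · rintro ⟨ha, _, hc⟩
        exact ⟨ha, hc⟩
      · rintro ⟨ha, hb⟩
        exact ⟨ha, closedBall_subset_ball (by linarith) ha, hb⟩
    rw [h1, measure_diff inter_subset_right
      ((measurableSet_closedBall.inter (measurableSet_ball.inter
        hΩo.measurableSet))).nullMeasurableSet
      (by rw [h2]; exact ne_of_lt (lt_of_le_of_lt (measure_mono inter_subset_left)
        measure_closedBall_lt_top)), h2, vol_inter_closedBall hn]
  have hm₁ : ENNReal.ofReal m ≤ volume V₁ :=
    ENNReal.ofReal_le_of_le_toReal (min_le_left _ _)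
  have hm₀ : ENNReal.ofReal m ≤ volume V₀ := by
    refine ENNReal.ofReal_le_of_le_toReal ?_
    rw [hvol₀, ENNReal.toReal_sub_of_le
      (measure_mono (inter_subset_inter_left Ω (ball_subset_ball (by linarith)))) (hfin _)]
    exact min_le_right _ _
  have hres := sp_bound hn hp1 hpn hC hΩo hsp hulip hx (r := 2*t) (by positivity)
    hK'm (by positivity : (0:ℝ) ≤ 2/t) hgrad0 hL hV₁m hV₀m hV₁s hV₀s
    (g := 1/2) (by norm_num) hm0 hm₁ hm₀ (sep01 hV₁val hV₀val)
  -- bound κ by Φ1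
  set κ : ℝ := (volume (K' ∩ (ball x (lam * (2*t)) ∩ Ω))).toReal with hκ
  have hκΦ : κ ≤ Φ1 := by
    have hsub : K' ∩ (ball x (lam * (2*t)) ∩ Ω) ⊆ closedBall x t ∩ Ω :=
      fun w hw => ⟨hw.1.1, hw.2.2⟩
    have := ENNReal.toReal_mono (by rw [vol_inter_closedBall hn]; exact hfin _)
      (measure_mono hsub)
    rwa [vol_inter_closedBall hn] at this
  have hκ0 : 0 ≤ κ := ENNReal.toReal_nonneg
  have hΦ10 : 0 ≤ Φ1 := ENNReal.toReal_nonneg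
  -- now real arithmetic
  have he₂ : ((n:ℝ) - p) / ((n:ℝ) * p) = 1 / q := by rw [hq, one_div_div]
  have hstep1 : m ^ ((1:ℝ)/q) ≤ (4*C/t) * Φ1 ^ ((1:ℝ)/p) := by
    have h1 : C * ((2/t) ^ p * κ) ^ ((1:ℝ)/p) ≤ C * ((2/t) ^ p * Φ1) ^ ((1:ℝ)/p) := by
      refine mul_le_mul_of_nonneg_left ?_ hC0.le
      exact Real.rpow_le_rpow (by positivity)
        (mul_le_mul_of_nonneg_left hκΦ (by positivity)) (by positivity)
    have h2 : ((2/t) ^ p * Φ1) ^ ((1:ℝ)/p) = (2/t) * Φ1 ^ ((1:ℝ)/p) := by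
      rw [Real.mul_rpow (by positivity) hΦ10, ← Real.rpow_mul (by positivity),
        mul_one_div_cancel hp0.ne', Real.rpow_one]
    rw [he₂] at hres
    have h3 : (1/2 : ℝ) * (m ^ ((1:ℝ)/q)) ≤ C * ((2/t) * Φ1 ^ ((1:ℝ)/p)) := by
      calc (1/2 : ℝ) * (m ^ ((1:ℝ)/q)) ≤ C * ((2/t) ^ p * κ) ^ ((1:ℝ)/p) := hres
        _ ≤ C * ((2/t) ^ p * Φ1) ^ ((1:ℝ)/p) := h1
        _ = C * ((2/t) * Φ1 ^ ((1:ℝ)/p)) := by rw [h2]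
    have h7 : C * (2/t * Φ1 ^ ((1:ℝ)/p)) = (1/2) * ((4*C/t) * Φ1 ^ ((1:ℝ)/p)) := by
      ring
    rw [h7] at h3
    linarith
  have h4 : m = (m ^ ((1:ℝ)/q)) ^ q := by
    rw [← Real.rpow_mul hm0, one_div_mul_cancel hq0.ne', Real.rpow_one]
  have h5 : ((4*C/t) * Φ1 ^ ((1:ℝ)/p)) ^ q = (4*C/t) ^ q * Φ1 ^ (q/p) := by
    rw [Real.mul_rpow (by positivity) (Real.rpow_nonneg hΦ10 _),
      ← Real.rpow_mul hΦ10]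
    congr 2
    ring
  calc m = (m ^ ((1:ℝ)/q)) ^ q := h4
    _ ≤ ((4*C/t) * Φ1 ^ ((1:ℝ)/p)) ^ q :=
        Real.rpow_le_rpow (Real.rpow_nonneg hm0 _) hstep1 hq0.le
    _ = (4*C/t) ^ q * Φ1 ^ (q/p) := h5


lemma density {p C lam : ℝ} (hn : 2 ≤ n) (hp1 : 1 ≤ p) (hpn : p < n)
    (hC : 1 ≤ C) (hlam : 1 ≤ lam) {Ω : Set (Euc n)} (hΩo : IsOpen Ω)
    (hΩne : Ω.Nonempty) (hBdd : Bornology.IsBounded Ω) (hsp : SPH n p C lam Ω) :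
    ∃ εd : ℝ, 0 < εd ∧ ∀ x ∈ Ω, ∀ t : ℝ, 0 < t → t ≤ diam Ω →
      εd * t ^ n ≤ (volume (ball x t ∩ Ω)).toReal := by
  have hn0 : (0:ℝ) < n := by
    have : (2:ℝ) ≤ n := by exact_mod_cast hn
    linarith
  have hnp : 0 < (n:ℝ) - p := by linarith
  have hp0 : 0 < p := by linarith
  have hC0 : 0 < C := by linarith
  set q : ℝ := (n:ℝ) * p / ((n:ℝ) - p) with hq
  have hq0 : 0 < q := div_pos (mul_pos hn0 hp0) hnp
  set σ : ℝ := q / p with hσ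
  have hσm1 : σ - 1 = p / ((n:ℝ) - p) := by
    rw [hσ, hq]
    field_simp
    ring
  have hσ1 : 0 < σ - 1 := by
    rw [hσm1]
    positivity
  have hexp : (n:ℝ) * (σ - 1) = q := by
    rw [hσm1, hq, mul_div_assoc]
  set ω : ℝ := (volume (ball (0:Euc n) 1)).toReal with hωd
  have hω : 0 < ω :=
    ENNReal.toReal_pos (measure_ball_pos _ _ one_pos).ne' measure_ball_lt_top.ne
  have hMfin : volume Ω ≠ ⊤ := by
    obtain ⟨R, hR⟩ := hBdd.subset_ball hΩne.some
    exact ne_of_lt (lt_of_le_of_lt (measure_mono hR) measure_ball_lt_top)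
  set MΩ : ℝ := (volume Ω).toReal with hMd
  have hM0 : 0 < MΩ := ENNReal.toReal_pos (hΩo.measure_pos volume hΩne).ne' hMfin
  set D : ℝ := diam Ω with hDd
  have hD0 : 0 < D := by
    obtain ⟨x₀, hx₀⟩ := hΩne
    obtain ⟨ρ, hρ, hρsub⟩ := Metric.isOpen_iff.1 hΩo x₀ hx₀
    set v : Euc n := EuclideanSpace.single (⟨0, by omega⟩ : Fin n) (ρ/2) with hv
    have hnv : ‖v‖ = ρ/2 := by
      rw [hv, EuclideanSpace.norm_single, Real.norm_eq_abs, abs_of_pos (by linarith)]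
    have hdv : dist (x₀ + v) x₀ = ρ/2 := by
      rw [dist_eq_norm, add_sub_cancel_left, hnv]
    have hyΩ : x₀ + v ∈ Ω := hρsub (by rw [mem_ball, hdv]; linarith)
    have := Metric.dist_le_diam_of_mem hBdd hyΩ hx₀
    rw [hdv] at this
    calc (0:ℝ) < ρ/2 := by linarith
      _ ≤ D := this
  have hCq : 0 < (4*C)^q := Real.rpow_pos_of_pos (by linarith) q
  set e3 : ℝ := (1/(2^(n+1)*(4*C)^q)) ^ ((1:ℝ)/(σ-1)) with he3
  have he30 : 0 < e3 := Real.rpow_pos_of_pos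
    (div_pos one_pos (mul_pos (pow_pos two_pos _) hCq)) _
  set ε : ℝ := min (ω/2) (min (MΩ/(2*D^n)) e3) with hε
  have hε0 : 0 < ε :=
    lt_min (half_pos hω) (lt_min (div_pos hM0 (mul_pos two_pos (pow_pos hD0 n))) he30)
  have hεω : ε ≤ ω/2 := min_le_left _ _
  have hεM : ε ≤ MΩ/(2*D^n) := (min_le_right _ _).trans (min_le_left _ _)
  have hεe3 : ε ≤ e3 := (min_le_right _ _).trans (min_le_right _ _)
  have hc3 : (4*C)^q * ε^(σ-1) ≤ 1/2^(n+1) := by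
    have h1 : ε^(σ-1) ≤ e3^(σ-1) := Real.rpow_le_rpow hε0.le hεe3 hσ1.le
    have h2 : e3^(σ-1) = 1/(2^(n+1)*(4*C)^q) := by
      rw [he3, ← Real.rpow_mul (by positivity), one_div_mul_cancel hσ1.ne', Real.rpow_one]
    calc (4*C)^q * ε^(σ-1) ≤ (4*C)^q * (1/(2^(n+1)*(4*C)^q)) :=
          mul_le_mul_of_nonneg_left (h1.trans h2.le) hCq.le
      _ = 1/2^(n+1) := by
          field_simp
  refine ⟨ε, hε0, ?_⟩
  intro x hx t ht htD
  by_contra hcon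
  push_neg at hcon
  set Φ : ℝ → ℝ := fun τ => (volume (ball x τ ∩ Ω)).toReal with hΦd
  have hΦfin : ∀ τ : ℝ, volume (ball x τ ∩ Ω) ≠ ⊤ := fun τ =>
    ne_of_lt (lt_of_le_of_lt (measure_mono inter_subset_left) measure_ball_lt_top)
  have hΦnn : ∀ τ : ℝ, 0 ≤ Φ τ := fun τ => ENNReal.toReal_nonneg
  have hΦpos : ∀ τ : ℝ, 0 < τ → 0 < Φ τ := fun τ hτ =>
    ENNReal.toReal_pos
      (((isOpen_ball.inter hΩo).measure_pos volume ⟨x, mem_ball_self hτ, hx⟩).ne') (hΦfin τ)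
  obtain ⟨ρ₀, hρ₀, hρ₀sub⟩ := Metric.isOpen_iff.1 hΩo x hx
  have hΦball : ∀ τ : ℝ, 0 < τ → τ ≤ ρ₀ → Φ τ = ω * τ^n := by
    intro τ h1 h2
    have hss : ball x τ ∩ Ω = ball x τ :=
      inter_eq_left.2 ((ball_subset_ball h2).trans hρ₀sub)
    simp only [hΦd]
    rw [hss, vol_ball hn x h1.le, ENNReal.toReal_mul,
      ENNReal.toReal_ofReal (by positivity)]
    rw [hωd, mul_comm]
  have hΦfull : ∀ τ : ℝ, D < τ → Φ τ = MΩ := by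
    intro τ h1
    have hss : ball x τ ∩ Ω = Ω := by
      refine inter_eq_right.2 fun w hw => ?_
      rw [mem_ball]
      exact lt_of_le_of_lt (Metric.dist_le_diam_of_mem hBdd hw hx) h1
    simp only [hΦd]
    rw [hss, hMd]
  have h2k1 : ∀ k : ℕ, (1:ℝ) ≤ 2^k := fun k => one_le_pow₀ (by norm_num)
  -- the halving step
  have hstep : ∀ τ : ℝ, 0 < τ → τ ≤ D → ∀ k : ℕ, 2^k * Φ τ < ε * τ^n →
      ∃ τ' : ℝ, 0 < τ' ∧ τ' ≤ D ∧ 2^(k+1) * Φ τ' < ε * τ'^n := by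
    intro τ hτ hτD k hbad
    have hbad1 : Φ τ < ε * τ^n := by
      have := mul_le_mul_of_nonneg_right (h2k1 k) (hΦnn τ)
      rw [one_mul] at this
      linarith
    have hdag := dagger hn hp1 hpn hC hlam hΩo hsp hx hτ
    rw [← hq, ← hσ] at hdag
    have hkey : (4*C/τ)^q * (Φ τ)^σ ≤ (1/2^(n+1)) * Φ τ := by
      have h1 : (Φ τ)^σ = (Φ τ)^(σ-1) * Φ τ := by
        have hσe : σ = (σ-1) + 1 := by ring
        rw [hσe, Real.rpow_add (hΦpos τ hτ), Real.rpow_one]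
        ring_nf
      have h2 : (Φ τ)^(σ-1) ≤ (ε * τ^n)^(σ-1) :=
        Real.rpow_le_rpow (hΦnn τ) hbad1.le hσ1.le
      have h3 : (ε * τ^n)^(σ-1) = ε^(σ-1) * τ^((n:ℝ)*(σ-1)) := by
        rw [Real.mul_rpow hε0.le (by positivity), ← Real.rpow_natCast τ n,
          ← Real.rpow_mul hτ.le]
      have h4 : (4*C/τ)^q = (4*C)^q / τ^q := Real.div_rpow (by linarith) hτ.le q
      calc (4*C/τ)^q * (Φ τ)^σ = ((4*C)^q / τ^q) * ((Φ τ)^(σ-1) * Φ τ) := by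
            rw [h4, h1]
        _ ≤ ((4*C)^q / τ^q) * ((ε^(σ-1) * τ^((n:ℝ)*(σ-1))) * Φ τ) := by
            refine mul_le_mul_of_nonneg_left
              (mul_le_mul_of_nonneg_right (h2.trans h3.le) (hΦnn τ)) (by positivity)
        _ = ((4*C)^q * ε^(σ-1)) * (τ^((n:ℝ)*(σ-1)) / τ^q) * Φ τ := by ring
        _ = ((4*C)^q * ε^(σ-1)) * Φ τ := by
            rw [hexp, div_self (Real.rpow_pos_of_pos hτ q).ne', mul_one]
        _ ≤ (1/2^(n+1)) * Φ τ := mul_le_mul_of_nonneg_right hc3 (hΦnn τ)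
    have hmin : min (Φ (τ/2)) (Φ (2*τ) - Φ τ) ≤ (1/2^(n+1)) * Φ τ := hdag.trans hkey
    rcases min_cases (Φ (τ/2)) (Φ (2*τ) - Φ τ) with ⟨heq, _⟩ | ⟨heq, _⟩
    · -- branch down
      rw [heq] at hmin
      refine ⟨τ/2, by positivity, by linarith, ?_⟩
      have h6 : (2:ℝ)^(k+1) * Φ (τ/2) ≤ 2^(k+1) * ((1/2^(n+1)) * Φ τ) :=
        mul_le_mul_of_nonneg_left hmin (by positivity)
      have h7 : (2:ℝ)^(k+1) * ((1/2^(n+1)) * Φ τ) = (2^k * Φ τ) * (1/2^n) := by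
        rw [pow_succ, pow_succ]
        field_simp
      have h8 : ε * (τ/2)^n = (ε * τ^n) * (1/2^n) := by
        rw [div_pow]
        field_simp
      have h9 : (2:ℝ)^k * Φ τ * (1/2^n) < (ε * τ^n) * (1/2^n) :=
        mul_lt_mul_of_pos_right hbad (by positivity)
      rw [h8]
      linarith
    · -- branch up
      rw [heq] at hmin
      have h2n1 : (1:ℝ)/2^(n+1) ≤ 1 := by
        rw [div_le_one (by positivity)]
        exact h2k1 (n+1)
      have hΦ2 : Φ (2*τ) ≤ 2 * Φ τ := by
        have hh := mul_le_mul_of_nonneg_right h2n1 (hΦnn τ)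
        rw [one_mul] at hh
        linarith
      by_cases h2τ : 2*τ ≤ D
      · refine ⟨2*τ, by positivity, h2τ, ?_⟩
        have h10' := mul_le_mul_of_nonneg_left hΦ2 (by positivity : (0:ℝ) ≤ 2^k)
        have h10 : (2:ℝ)^(k+1) * Φ (2*τ) ≤ 4 * (2^k * Φ τ) := by
          calc (2:ℝ)^(k+1) * Φ (2*τ) = 2 * (2^k * Φ (2*τ)) := by
                rw [pow_succ]; ring
            _ ≤ 2 * (2^k * (2 * Φ τ)) := by linarith
            _ = 4 * (2^k * Φ τ) := by ring
        have h12 : 4*(ε*τ^n) ≤ ε*(2*τ)^n := by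
          rw [mul_pow]
          have h2n : (4:ℝ) ≤ 2^n := by
            calc (4:ℝ) = 2^2 := by norm_num
              _ ≤ 2^n := pow_le_pow_right₀ (by norm_num) hn
          have h12' := mul_le_mul_of_nonneg_right h2n
            (mul_nonneg hε0.le (pow_nonneg hτ.le n))
          calc 4*(ε*τ^n) ≤ 2^n*(ε*τ^n) := h12'
            _ = ε*(2^n*τ^n) := by ring
        linarith
      · exfalso
        push_neg at h2τ
        have hfull := hΦfull (2*τ) h2τ
        rw [hfull] at hΦ2
        have h13 : Φ τ < ε * D^n := by
          have h131 : ε * τ^n ≤ ε * D^n :=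
            mul_le_mul_of_nonneg_left (pow_le_pow_left₀ hτ.le hτD n) hε0.le
          linarith
        have h14 : ε * (2*D^n) ≤ MΩ := (le_div_iff₀
          (mul_pos two_pos (pow_pos hD0 n))).1 hεM
        linarith
    -- end step
  have hP : ∀ k : ℕ, ∃ τ : ℝ, 0 < τ ∧ τ ≤ D ∧ 2^k * Φ τ < ε * τ^n := by
    intro k
    induction k with
    | zero => exact ⟨t, ht, htD, by rw [pow_zero, one_mul]; exact hcon⟩
    | succ k ih =>
        obtain ⟨τ, h1, h2, h3⟩ := ih
        exact hstep τ h1 h2 k h3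
  obtain ⟨k, hk⟩ := pow_unbounded_of_one_lt (ε * D^n / (ω * ρ₀^n)) (one_lt_two (α := ℝ))
  obtain ⟨τ, hτ0, hτD, hbad⟩ := hP k
  rcases le_or_gt τ ρ₀ with hcase | hcase
  · rw [hΦball τ hτ0 hcase] at hbad
    have h15 : (2^k * ω) * τ^n < ε * τ^n := by
      calc (2^k * ω) * τ^n = 2^k * (ω * τ^n) := by ring
        _ < ε * τ^n := hbad
    have h16 : 2^k * ω < ε := lt_of_mul_lt_mul_right h15 (pow_nonneg hτ0.le n)
    have h17 : ω ≤ 2^k * ω := le_mul_of_one_le_left hω.le (h2k1 k)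
    linarith
  · have h18 : ω * ρ₀^n ≤ Φ τ := by
      rw [← hΦball ρ₀ hρ₀ le_rfl]
      exact ENNReal.toReal_mono (hΦfin τ)
        (measure_mono (inter_subset_inter_left Ω (ball_subset_ball hcase.le)))
    have h19 : ε * τ^n ≤ ε * D^n :=
      mul_le_mul_of_nonneg_left (pow_le_pow_left₀ hτ0.le hτD n) hε0.le
    have h20 : ε * D^n < 2^k * (ω * ρ₀^n) := by
      rw [div_lt_iff₀ (mul_pos hω (pow_pos hρ₀ n))] at hk
      linarith
    have h21 : 2^k * (ω * ρ₀^n) ≤ 2^k * Φ τ :=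
      mul_le_mul_of_nonneg_left h18 (by positivity)
    linarith


lemma exponent_calc {p εd C ω lam b₂ r : ℝ} (hn : 2 ≤ n) (hp1 : 1 ≤ p) (hpn : p < n)
    (hC : 1 ≤ C) (hlam : 1 ≤ lam) (hεd : 0 < εd) (hω : 0 < ω) (hb₂ : 0 < b₂) (hr : 0 < r)
    (hmain : (1/2) * (εd * (r/(2*lam))^n) ^ (((n:ℝ)-p)/((n:ℝ)*p)) ≤
      C * ((1/(b₂*r))^p * (ω*(4*(b₂*r))^n)) ^ ((1:ℝ)/p)) :
    1/(2*lam*((2*C*(ω*4^n)^((1:ℝ)/p)/εd^(((n:ℝ)-p)/((n:ℝ)*p)))^(p/((n:ℝ)-p)))) ≤ b₂ := by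
  have hn0 : (0:ℝ) < n := by
    have : (2:ℝ) ≤ n := by exact_mod_cast hn
    linarith
  have hnp : 0 < (n:ℝ) - p := by linarith
  have hp0 : 0 < p := by linarith
  have hC0 : 0 < C := by linarith
  have hlam0 : 0 < lam := by linarith
  set e₂ : ℝ := ((n:ℝ)-p)/((n:ℝ)*p) with he₂
  set a : ℝ := ((n:ℝ)-p)/p with ha
  have ha0 : 0 < a := by positivity
  have hne₂ : (n:ℝ) * e₂ = a := by
    rw [he₂, ha]
    field_simp
  set t : ℝ := r/(2*lam) with htd
  set s : ℝ := b₂*r with hsd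
  have ht0 : 0 < t := by positivity
  have hs0 : 0 < s := by positivity
  -- LHS rewrite
  have hLHS : (εd * t^n) ^ e₂ = εd^e₂ * t^a := by
    rw [Real.mul_rpow hεd.le (by positivity), ← Real.rpow_natCast t n,
      ← Real.rpow_mul ht0.le, hne₂]
  -- RHS rewrite
  have hRHS : ((1/s)^p * (ω*(4*s)^n)) ^ ((1:ℝ)/p) = (ω*4^n)^((1:ℝ)/p) * s^a := by
    have h1 : (1/s)^p * (ω*(4*s)^n) = (ω*4^n) * s^((n:ℝ)-p) := by
      rw [mul_pow, one_div, Real.inv_rpow hs0.le, ← Real.rpow_natCast s n,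
        Real.rpow_sub hs0]
      field_simp
    rw [h1, Real.mul_rpow (by positivity) (by positivity), ← Real.rpow_mul hs0.le]
    congr 2
    rw [ha]
    field_simp
  rw [hLHS, hRHS] at hmain
  set Q : ℝ := 2*C*(ω*4^n)^((1:ℝ)/p)/εd^e₂ with hQd
  have hQ0 : 0 < Q := by
    have h1 : (0:ℝ) < (ω*4^n)^((1:ℝ)/p) := Real.rpow_pos_of_pos (by positivity) _
    have h2 : (0:ℝ) < εd^e₂ := Real.rpow_pos_of_pos hεd _
    positivity
  have hεe0 : (0:ℝ) < εd^e₂ := Real.rpow_pos_of_pos hεd _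
  have hstep : εd^e₂ * t^a ≤ εd^e₂ * (Q * s^a) := by
    have h3 : εd^e₂ * (Q * s^a) = 2 * (C * ((ω*4^n)^((1:ℝ)/p) * s^a)) := by
      rw [hQd]
      field_simp
    rw [h3]
    linarith
  have hta : t^a ≤ Q * s^a := le_of_mul_le_mul_left hstep hεe0
  have hts : t ≤ Q^((1:ℝ)/a) * s := by
    by_contra hcon
    push_neg at hcon
    have h4 : (Q^((1:ℝ)/a) * s)^a < t^a :=
      Real.rpow_lt_rpow (by positivity) hcon ha0
    have h5 : (Q^((1:ℝ)/a) * s)^a = Q * s^a := by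
      rw [Real.mul_rpow (by positivity) hs0.le, ← Real.rpow_mul hQ0.le,
        one_div_mul_cancel ha0.ne', Real.rpow_one]
    rw [h5] at h4
    linarith
  have h6 : (0:ℝ) < Q^((1:ℝ)/a) := Real.rpow_pos_of_pos hQ0 _
  have h7 : 1/(2*lam) ≤ Q^((1:ℝ)/a) * b₂ := by
    have := hts
    rw [htd, hsd] at this
    rw [div_le_iff₀ (by positivity)]
    calc (1:ℝ) = (r/(2*lam)) * ((2*lam)/r) := by field_simp
      _ ≤ (Q^((1:ℝ)/a) * (b₂*r)) * ((2*lam)/r) := by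
          refine mul_le_mul_of_nonneg_right this (by positivity)
      _ = Q^((1:ℝ)/a) * b₂ * (2*lam) := by field_simp
  have h8 : (1:ℝ)/a = p/((n:ℝ)-p) := by
    rw [ha, one_div_div]
  rw [← h8]
  rw [div_le_iff₀ (by positivity)] at h7 ⊢
  linarith [h7, (by ring : Q^((1:ℝ)/a) * b₂ * (2*lam) = b₂ * (2*lam*Q^((1:ℝ)/a)))]


lemma llc2 {p C lam : ℝ} (hn : 2 ≤ n) (hp1 : 1 ≤ p) (hpn : p < n)
    (hC : 1 ≤ C) (hlam : 1 ≤ lam) {Ω : Set (Euc n)} (hΩo : IsOpen Ω)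
    (hΩconn : IsConnected Ω) (hBdd : Bornology.IsBounded Ω) (hsp : SPH n p C lam Ω)
    {εd : ℝ} (hεd : 0 < εd)
    (hden : ∀ x ∈ Ω, ∀ t : ℝ, 0 < t → t ≤ diam Ω →
      εd * t ^ n ≤ (volume (ball x t ∩ Ω)).toReal) :
    ∃ b₂ : ℝ, 0 < b₂ ∧ b₂ ≤ 1/12 ∧ ∀ z : Euc n, ∀ r : ℝ, 0 < r →
      ∀ x ∈ Ω \ ball z r, ∀ y ∈ Ω \ ball z r,
        JoinedByCurveIn (Ω \ ball z (b₂ * r)) x y := by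
  classical
  have hn0 : (0:ℝ) < n := by
    have : (2:ℝ) ≤ n := by exact_mod_cast hn
    linarith
  have hnp : 0 < (n:ℝ) - p := by linarith
  have hp0 : 0 < p := by linarith
  have hC0 : 0 < C := by linarith
  have hlam0 : 0 < lam := by linarith
  set ω : ℝ := (volume (ball (0:Euc n) 1)).toReal with hωd
  have hω : 0 < ω :=
    ENNReal.toReal_pos (measure_ball_pos _ _ one_pos).ne' measure_ball_lt_top.ne
  set e₂ : ℝ := ((n:ℝ)-p)/((n:ℝ)*p) with he₂
  set bstar : ℝ := 1/(2*lam*((2*C*(ω*4^n)^((1:ℝ)/p)/εd^e₂)^(p/((n:ℝ)-p)))) with hbs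
  have hbs0 : 0 < bstar := by
    have h1 : (0:ℝ) < (ω*4^n)^((1:ℝ)/p) := Real.rpow_pos_of_pos (by positivity) _
    have h2 : (0:ℝ) < εd^e₂ := Real.rpow_pos_of_pos hεd _
    have h3 : (0:ℝ) < (2*C*(ω*4^n)^((1:ℝ)/p)/εd^e₂)^(p/((n:ℝ)-p)) :=
      Real.rpow_pos_of_pos (by positivity) _
    rw [hbs]
    positivity
  set b₂ : ℝ := min (1/12) (bstar/2) with hb₂d
  have hb₂0 : 0 < b₂ := lt_min (by norm_num) (by linarith)
  have hb₂12 : b₂ ≤ 1/12 := min_le_left _ _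
  have hb₂bs : b₂ < bstar := lt_of_le_of_lt (min_le_right _ _) (by linarith)
  refine ⟨b₂, hb₂0, hb₂12, ?_⟩
  intro z r hr x hx y hy
  by_cases hA : (Ω ∩ ball z (b₂*r)).Nonempty
  swap
  · rw [Set.not_nonempty_iff_eq_empty] at hA
    have hO : Ω ⊆ Ω \ ball z (b₂*r) := fun w hw =>
      ⟨hw, fun hb => (Set.eq_empty_iff_forall_notMem.1 hA w) ⟨hw, hb⟩⟩
    exact joined_of_subset hO hΩo hΩconn hx.1 hy.1
  obtain ⟨w₀, hw₀Ω, hw₀b⟩ := hA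
  have hdx : r ≤ dist x z := le_of_not_gt (fun h => hx.2 h)
  have hdy : r ≤ dist y z := le_of_not_gt (fun h => hy.2 h)
  have hb₂r : b₂*r ≤ r/12 := by nlinarith
  have hrD : r ≤ 2 * diam Ω := by
    have h1 : dist x w₀ ≤ diam Ω := Metric.dist_le_diam_of_mem hBdd hx.1 hw₀Ω
    have h2 : dist w₀ z < b₂*r := mem_ball.1 hw₀b
    have h3 : dist x z ≤ dist x w₀ + dist w₀ z := dist_triangle _ _ _
    linarith
  set s : ℝ := b₂ * r with hsd
  have hs0 : 0 < s := by positivity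
  set t : ℝ := r/(2*lam) with htd
  have ht0 : 0 < t := by positivity
  have hlamt : lam * t = r/2 := by
    rw [htd]
    field_simp
  have htr : t ≤ r/2 := by
    rw [htd]
    apply div_le_div_of_nonneg_left hr.le (by norm_num)
    linarith
  have htD : t ≤ diam Ω := by linarith
  have hsr : 3*s ≤ r/4 := by
    rw [hsd]
    linarith
  have hsr12 : s ≤ r/12 := by rw [hsd]; linarith
  set U : Set (Euc n) := Ω \ closedBall z s with hUd
  have hUo : IsOpen U := hΩo.sdiff isClosed_closedBall
  have hxU : x ∈ U := by
    refine ⟨hx.1, fun hc => ?_⟩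
    rw [mem_closedBall] at hc
    linarith
  set F := connectedComponentIn U x with hFd
  have hFo : IsOpen F := hUo.connectedComponentIn
  by_cases hyF : y ∈ F
  · refine joined_of_subset ?_ hFo (isConnected_connectedComponentIn_iff.2 hxU)
      (mem_connectedComponentIn hxU) hyF
    refine (connectedComponentIn_subset _ _).trans fun w hw =>
      ⟨hw.1, fun hb => hw.2 (ball_subset_closedBall hb)⟩
  exfalso
  set θ : Euc n → ℝ := fun w => ramp (2*s) s (dist w z) with hθd
  set u : Euc n → ℝ := fun w => if w ∈ F then θ w else 0 with hud
  have hθlip : LipschitzWith (Real.toNNReal (1/s)) θ := by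
    have h := ramp_dist_lip (a := 2*s) hs0 z
    rwa [← hθd] at h
  have hzero_near : ∀ v : Euc n, dist v z < 2*s → u v = 0 := by
    intro v hv
    by_cases hvF : v ∈ F
    · simp only [hud, if_pos hvF, hθd]
      exact ramp_zero hs0 hv.le
    · simp [hud, if_neg hvF]
  have hnotcl : ∀ w : Euc n, w ∈ Ω → w ∉ F → s < dist w z → w ∉ closure F := by
    intro w h1 h2 h3
    refine not_mem_closure_ccIn hUo ⟨h1, fun hc => ?_⟩ h2
    rw [mem_closedBall] at hc
    linarith
  have hzero_nclose : ∀ v : Euc n, v ∉ closure F → u v = 0 := fun v hv => by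
    simp [hud, if_neg (fun h => hv (subset_closure h))]
  have hone : ∀ v ∈ F, 3*s ≤ dist v z → u v = 1 := by
    intro v hv h3
    simp only [hud, if_pos hv, hθd]
    exact ramp_one hs0 (by linarith)
  have hnhds : ∀ w ∈ Ω, ∃ sn ∈ nhds w, LipschitzOnWith (Real.toNNReal (1/s)) u sn := by
    intro w hw
    by_cases hwF : w ∈ F
    · exact ⟨F, hFo.mem_nhds hwF,
        lip_congr (hθlip.lipschitzOnWith (s := F)) (fun v hv => by simp [hud, if_pos hv])⟩
    · rcases lt_or_ge (dist w z) (2*s) with hlt | hge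
      · exact ⟨ball z (2*s), isOpen_ball.mem_nhds (mem_ball.2 hlt),
          lip_congr (lip_const (c := (0:ℝ))) (fun v hv => hzero_near v (mem_ball.1 hv))⟩
      · have hcl : w ∉ closure F := hnotcl w hw hwF (by linarith)
        exact ⟨(closure F)ᶜ, isClosed_closure.isOpen_compl.mem_nhds hcl,
          lip_congr (lip_const (c := (0:ℝ))) (fun v hv => hzero_nclose v hv)⟩
  have hulip : LocallyLipschitzOnSet u Ω := loclip_of_nhds hnhds
  have hucont : ∀ w ∈ Ω, ContinuousAt u w := fun w hw => contAt_of_nhds (hnhds w hw)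
  have huL : ∀ w ∈ Ω, ‖fderiv ℝ u w‖ ≤ 1/s := by
    intro w hw
    have h1 := fderiv_le_of_nhds (hnhds w hw)
    rwa [Real.coe_toNNReal _ (by positivity)] at h1
  set K' : Set (Euc n) := closedBall z (3*s) \ ball z (2*s) with hK'd
  have hK'm : MeasurableSet K' := measurableSet_closedBall.diff measurableSet_ball
  have hgrad00 : ∀ w ∈ Ω, w ∉ K' → fderiv ℝ u w = 0 := by
    intro w hw hK
    rcases not_and_or.1 (fun hc => hK ⟨hc.1, hc.2⟩) with h | h
    · rw [mem_closedBall, not_le] at h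
      by_cases hwF : w ∈ F
      · refine fderiv_zero_of_loc_const (s := F ∩ (closedBall z (3*s))ᶜ)
          (hFo.inter isClosed_closedBall.isOpen_compl)
          ⟨hwF, by rw [mem_compl_iff, mem_closedBall, not_le]; exact h⟩ (c := (1:ℝ)) ?_
        intro v hv
        have hv3 := hv.2
        rw [mem_compl_iff, mem_closedBall, not_le] at hv3
        exact hone v hv.1 hv3.le
      · have hcl : w ∉ closure F := hnotcl w hw hwF (by linarith)
        exact fderiv_zero_of_loc_const isClosed_closure.isOpen_compl hcl (c := (0:ℝ))
          (fun v hv => hzero_nclose v hv)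
    · rw [not_not] at h
      exact fderiv_zero_of_loc_const (s := ball z (2*s)) isOpen_ball h (c := (0:ℝ))
        (fun v hv => hzero_near v (mem_ball.1 hv))
  have hgradx : ∀ w ∈ ball x (lam*t) ∩ Ω, fderiv ℝ u w = 0 := by
    intro w hw
    refine hgrad00 w hw.2 (fun hK => ?_)
    have h1 : dist w z ≤ 3*s := by
      have := hK.1
      rwa [mem_closedBall] at this
    have h2 : dist w x < lam*t := mem_ball.1 hw.1
    rw [hlamt] at h2
    have h3 : dist x z ≤ dist x w + dist w z := dist_triangle _ _ _
    rw [dist_comm x w] at h3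
    linarith
  have hgrady : ∀ w ∈ ball y (lam*t) ∩ Ω, fderiv ℝ u w = 0 := by
    intro w hw
    refine hgrad00 w hw.2 (fun hK => ?_)
    have h1 : dist w z ≤ 3*s := by
      have := hK.1
      rwa [mem_closedBall] at this
    have h2 : dist w y < lam*t := mem_ball.1 hw.1
    rw [hlamt] at h2
    have h3 : dist y z ≤ dist y w + dist w z := dist_triangle _ _ _
    rw [dist_comm y w] at h3
    linarith
  -- x-anchor
  obtain ⟨ρx, hρx0, hρxs⟩ := Metric.isOpen_iff.1 hΩo x hx.1
  set δ₁ : ℝ := min (min t ρx) (r/4) with hδ₁d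
  have hδ₁0 : 0 < δ₁ := lt_min (lt_min ht0 hρx0) (by positivity)
  have hδ₁t : δ₁ ≤ t := (min_le_left _ _).trans (min_le_left _ _)
  have hδ₁ρ : δ₁ ≤ ρx := (min_le_left _ _).trans (min_le_right _ _)
  have hδ₁r : δ₁ ≤ r/4 := min_le_right _ _
  have hball₁Ω : ball x δ₁ ⊆ Ω := fun v hv =>
    hρxs (mem_ball.2 (lt_of_lt_of_le (mem_ball.1 hv) hδ₁ρ))
  have hdist₁ : ∀ v ∈ ball x δ₁, 3*s ≤ dist v z := by
    intro v hv
    rw [mem_ball] at hv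
    have h3 : dist x z ≤ dist x v + dist v z := dist_triangle _ _ _
    rw [dist_comm x v] at h3
    linarith
  have hball₁U : ball x δ₁ ⊆ U := by
    intro v hv
    refine ⟨hball₁Ω hv, fun hc => ?_⟩
    rw [mem_closedBall] at hc
    have := hdist₁ v hv
    linarith
  have hball₁F : ball x δ₁ ⊆ F :=
    (convex_ball x δ₁).isPreconnected.subset_connectedComponentIn
      (mem_ball_self hδ₁0) hball₁U
  have hball₁val : ∀ v ∈ ball x δ₁, u v = 1 := fun v hv =>
    hone v (hball₁F hv) (hdist₁ v hv)
  have hball₁sub : ball x δ₁ ⊆ ball x t ∩ Ω := fun v hv =>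
    ⟨mem_ball.2 (lt_of_lt_of_le (mem_ball.1 hv) hδ₁t), hball₁Ω hv⟩
  have hEx := sp_aeconst hn hp1 hpn hC hΩo hsp hulip hucont hx.1 ht0 hgradx
    isOpen_ball (nonempty_ball.2 hδ₁0) hball₁sub hball₁val
  -- y-anchor
  have hycl : y ∉ closure F := hnotcl y hy.1 hyF (by linarith)
  obtain ⟨ρy, hρy0, hρys⟩ :=
    Metric.isOpen_iff.1 isClosed_closure.isOpen_compl y hycl
  obtain ⟨ρy', hρy'0, hρy's⟩ := Metric.isOpen_iff.1 hΩo y hy.1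
  set δ₀ : ℝ := min (min t ρy) ρy' with hδ₀d
  have hδ₀0 : 0 < δ₀ := lt_min (lt_min ht0 hρy0) hρy'0
  have hball₀val : ∀ v ∈ ball y δ₀, u v = 0 := by
    intro v hv
    refine hzero_nclose v (hρys (mem_ball.2 ?_))
    exact lt_of_lt_of_le (mem_ball.1 hv) ((min_le_left _ _).trans (min_le_right _ _))
  have hball₀sub : ball y δ₀ ⊆ ball y t ∩ Ω := fun v hv =>
    ⟨mem_ball.2 (lt_of_lt_of_le (mem_ball.1 hv) ((min_le_left _ _).trans (min_le_left _ _))),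
     hρy's (mem_ball.2 (lt_of_lt_of_le (mem_ball.1 hv) (min_le_right _ _)))⟩
  have hEy := sp_aeconst hn hp1 hpn hC hΩo hsp hulip hucont hy.1 ht0 hgrady
    isOpen_ball (nonempty_ball.2 hδ₀0) hball₀sub hball₀val
  -- main application
  set ρm : ℝ := dist x y + t with hρmd
  have hρm0 : 0 < ρm := by
    have := dist_nonneg (x := x) (y := y)
    rw [hρmd]
    linarith
  have hopen1 : ∀ c : ℝ, IsOpen {w | w ∈ Ω ∧ u w ≠ c} := by
    intro c
    rw [isOpen_iff_mem_nhds]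
    intro w hw
    have h1 : u ⁻¹' ({c}ᶜ) ∈ nhds w :=
      (hucont w hw.1).preimage_mem_nhds (compl_singleton_mem_nhds hw.2)
    filter_upwards [Filter.inter_mem (hΩo.mem_nhds hw.1) h1] with v hv
    exact ⟨hv.1, hv.2⟩
  have hNmeas : ∀ (x' : Euc n) (c : ℝ), MeasurableSet {w | w ∈ ball x' t ∩ Ω ∧ u w ≠ c} := by
    intro x' c
    have heq : {w | w ∈ ball x' t ∩ Ω ∧ u w ≠ c} =
        (ball x' t ∩ Ω) ∩ {w | w ∈ Ω ∧ u w ≠ c} := by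
      ext w
      constructor
      · rintro ⟨h1, h2⟩
        exact ⟨h1, h1.2, h2⟩
      · rintro ⟨h1, _, h3⟩
        exact ⟨h1, h3⟩
    rw [heq]
    exact (measurableSet_ball.inter hΩo.measurableSet).inter (hopen1 c).measurableSet
  set V₁ : Set (Euc n) := (ball x t ∩ Ω) \ {w | w ∈ ball x t ∩ Ω ∧ u w ≠ 1} with hV₁d
  set V₀ : Set (Euc n) := (ball y t ∩ Ω) \ {w | w ∈ ball y t ∩ Ω ∧ u w ≠ 0} with hV₀d
  have hV₁m : MeasurableSet V₁ :=
    (measurableSet_ball.inter hΩo.measurableSet).diff (hNmeas x 1)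
  have hV₀m : MeasurableSet V₀ :=
    (measurableSet_ball.inter hΩo.measurableSet).diff (hNmeas y 0)
  have hV₁val : ∀ w ∈ V₁, u w = 1 := by
    intro w hw
    by_contra hne
    exact hw.2 ⟨hw.1, hne⟩
  have hV₀val : ∀ w ∈ V₀, u w = 0 := by
    intro w hw
    by_contra hne
    exact hw.2 ⟨hw.1, hne⟩
  have hV₁sub : V₁ ⊆ ball x ρm ∩ Ω := by
    intro w hw
    refine ⟨mem_ball.2 ?_, hw.1.2⟩
    have h1 : dist w x < t := mem_ball.1 hw.1.1
    have h2 : (0:ℝ) ≤ dist x y := dist_nonneg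
    rw [hρmd]
    linarith
  have hV₀sub : V₀ ⊆ ball x ρm ∩ Ω := by
    intro w hw
    refine ⟨mem_ball.2 ?_, hw.1.2⟩
    have h1 : dist w y < t := mem_ball.1 hw.1.1
    have h2 : dist w x ≤ dist w y + dist y x := dist_triangle _ _ _
    rw [hρmd, dist_comm x y]
    linarith
  have hV₁vol : volume V₁ = volume (ball x t ∩ Ω) := measure_diff_null hEx
  have hV₀vol : volume V₀ = volume (ball y t ∩ Ω) := measure_diff_null hEy
  have hm₁ : ENNReal.ofReal (εd * t^n) ≤ volume V₁ := by
    rw [hV₁vol]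
    exact ENNReal.ofReal_le_of_le_toReal (hden x hx.1 t ht0 htD)
  have hm₀ : ENNReal.ofReal (εd * t^n) ≤ volume V₀ := by
    rw [hV₀vol]
    exact ENNReal.ofReal_le_of_le_toReal (hden y hy.1 t ht0 htD)
  have hres := sp_bound hn hp1 hpn hC hΩo hsp hulip hx.1 (r := ρm) hρm0 hK'm
    (L := 1/s) (by positivity) (fun w hw hK => hgrad00 w hw.2 hK)
    (fun w hw => huL w hw.2) hV₁m hV₀m hV₁sub hV₀sub
    (g := 1/2) (by norm_num) (by positivity) hm₁ hm₀ (sep01 hV₁val hV₀val)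
  have hκb : (volume (K' ∩ (ball x (lam * ρm) ∩ Ω))).toReal ≤ ω*(4*s)^n := by
    have hsub : K' ∩ (ball x (lam * ρm) ∩ Ω) ⊆ ball z (4*s) := by
      intro w hw
      have h1 := hw.1.1
      rw [mem_closedBall] at h1
      rw [mem_ball]
      linarith
    have h2 := ENNReal.toReal_mono (measure_ball_lt_top (μ := (volume : Measure (Euc n))) (x := z) (r := 4*s)).ne (measure_mono hsub)
    calc (volume (K' ∩ (ball x (lam * ρm) ∩ Ω))).toReal
        ≤ (volume (ball z (4*s))).toReal := h2
      _ = ω*(4*s)^n := by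
          rw [vol_ball hn z (by positivity), ENNReal.toReal_mul,
            ENNReal.toReal_ofReal (by positivity), hωd, mul_comm]
  have hmain2 : (1/2) * (εd * t^n) ^ e₂ ≤
      C * ((1/s)^p * (ω*(4*s)^n)) ^ ((1:ℝ)/p) := by
    rw [he₂]
    refine hres.trans ?_
    refine mul_le_mul_of_nonneg_left (Real.rpow_le_rpow (by positivity)
      (mul_le_mul_of_nonneg_left hκb (by positivity)) (by positivity)) (by linarith)
  rw [htd, hsd] at hmain2
  have hfin := exponent_calc hn hp1 hpn hC hlam hεd hω hb₂0 hr (by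
    rw [he₂] at hmain2
    exact hmain2)
  rw [← he₂, ← hbs] at hfin
  linarith

end Stmt18

/-- a bounded domain supporting the local Sobolev–Poincaré
inequality of order `p`, `1 ≤ p < n`, at all scales `0 < r < ∞`, is LLC. -/
theorem stmt18 (n : ℕ) (hn : 2 ≤ n) (p : ℝ) (hp1 : 1 ≤ p) (hpn : p < n)
    (Ω : Set (Euc n)) (hOpen : IsOpen Ω)
    (hConn : IsConnected Ω) (hBdd : Bornology.IsBounded Ω)
    (hSP : ∃ C : ℝ, 1 ≤ C ∧ ∃ lam : ℝ, 1 ≤ lam ∧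
      ∀ u : Euc n → ℝ, LocallyLipschitzOnSet u Ω →
        ∀ x₀ ∈ Ω, ∀ r : ℝ, 0 < r →
          (⨅ c : ℝ, (∫⁻ y in ball x₀ r ∩ Ω,
              ENNReal.ofReal |u y - c| ^ ((n : ℝ) * p / ((n : ℝ) - p)) ∂volume)
                ^ (((n : ℝ) - p) / ((n : ℝ) * p)))
            ≤ ENNReal.ofReal C *
              (∫⁻ y in ball x₀ (lam * r) ∩ Ω,
                ENNReal.ofReal ‖fderiv ℝ u y‖ ^ p ∂volume) ^ (1 / p)) :
    IsLLC Ω := by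
  obtain ⟨C, hC, lam, hlam, hsp⟩ := hSP
  have hsp' : Stmt18.SPH n p C lam Ω := hsp
  have hΩne : Ω.Nonempty := hConn.nonempty
  obtain ⟨εd, hεd, hden⟩ := Stmt18.density hn hp1 hpn hC hlam hOpen hΩne hBdd hsp'
  obtain ⟨b₂, hb₂0, hb₂12, hllc2⟩ :=
    Stmt18.llc2 hn hp1 hpn hC hlam hOpen hConn hBdd hsp' hεd hden
  have hlam0 : 0 < lam := by linarith
  set b : ℝ := min (1/(1+8*lam)) b₂ with hbd
  have hb0 : 0 < b := lt_min (by positivity) hb₂0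
  have hb1 : b ≤ 1 := le_trans (min_le_right _ _) (by linarith)
  refine ⟨b, hb0, hb1, ?_⟩
  intro z r hr
  constructor
  · intro x hx y hy
    obtain ⟨γ, h1, h2, h3, h4⟩ := Stmt18.llc1 hn hp1 hpn hC hlam hOpen hsp' hr hx hy
    refine ⟨γ, h1, h2, h3, fun tt htt => ?_⟩
    have h5 := h4 htt
    refine ⟨h5.1, ?_⟩
    have h6 : (1+8*lam)*r ≤ r/b := by
      have h7 : r/(1/(1+8*lam)) ≤ r/b :=
        div_le_div_of_nonneg_left hr.le hb0 (min_le_left _ _)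
      have h8 : r/(1/(1+8*lam)) = (1+8*lam)*r := by
        have h9 : (1:ℝ)+8*lam ≠ 0 := by linarith
        field_simp
      rwa [h8] at h7
    exact ball_subset_ball h6 h5.2
  · intro x hx y hy
    obtain ⟨γ, h1, h2, h3, h4⟩ := hllc2 z r hr x hx y hy
    refine ⟨γ, h1, h2, h3, fun tt htt => ?_⟩
    refine ⟨(h4 htt).1, fun hb => (h4 htt).2 ?_⟩
    exact ball_subset_ball (mul_le_mul_of_nonneg_right (min_le_right _ _) hr.le) hb
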